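/- arXiv:1004.5231 — 6 statements merged into one kernel-verified Lean document; each statement's English description precedes it below -/
import Mathlib

section
/- Let ω ∈ D(ν,τ) and let η: ℝ^ℓ → ℂ be given by an absolutely convergent Fourier series η(θ) = Σ_{k∈ℤ^ℓ} η̂_k e^{2πi k·θ} whose coefficients satisfy η̂_0 = 0 and |η̂_k| ≤ M e^{−δ|k|} for some constants M > 0, δ > 0. Then the series φ(θ) = Σ_{k∈ℤ^ℓ\{0}} η̂_k (1 − e^{2πi k·ω})^{−1} e^{2πi k·θ} converges absolutely and uniformly on ℝ^ℓ, defines a continuous ℤ^ℓ-periodic function φ, and φ(θ) − φ(θ + ω) = η(θ) for every θ ∈ ℝ^ℓ. -/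
/-- The `k`-th term of the formal solution of the cohomology equation
`φ − φ∘T_ω = η`, namely `η̂_k (1 − e^{2πi k·ω})⁻¹ e^{2πi k·θ}`. -/
noncomputable def phiTerm (ℓ : ℕ) (ηhat : (Fin ℓ → ℤ) → ℂ) (ω : Fin ℓ → ℝ)
    (k : Fin ℓ → ℤ) (θ : Fin ℓ → ℝ) : ℂ :=
  ηhat k *
    (1 - Complex.exp (((2 * Real.pi : ℝ) : ℂ) * Complex.I *
      ((∑ i, (k i : ℝ) * ω i : ℝ) : ℂ)))⁻¹ *
    Complex.exp (((2 * Real.pi : ℝ) : ℂ) * Complex.I *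
      ((∑ i, (k i : ℝ) * θ i : ℝ) : ℂ))



open Complex Real Filter Finset

noncomputable def ee (x : ℝ) : ℂ :=
  Complex.exp (((2 * Real.pi : ℝ) : ℂ) * Complex.I * (x : ℂ))

lemma ee_abs (x : ℝ) : ‖ee x‖ = 1 := by
  have h : ((2 * Real.pi : ℝ) : ℂ) * Complex.I * (x : ℂ)
      = ((2 * Real.pi * x : ℝ) : ℂ) * Complex.I := by push_cast; ring
  rw [ee, h, Complex.norm_exp_ofReal_mul_I]

lemma ee_add (x y : ℝ) : ee (x + y) = ee x * ee y := by
  rw [ee, ee, ee, ← Complex.exp_add]; push_cast; ring_nf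

lemma ee_int (n : ℤ) : ee n = 1 := by
  rw [ee, show ((2 * Real.pi : ℝ) : ℂ) * Complex.I * ((n : ℝ) : ℂ)
      = (n : ℂ) * (2 * Real.pi * Complex.I) by push_cast; ring,
    Complex.exp_int_mul_two_pi_mul_I]

lemma abs_one_sub_ee (x : ℝ) : ‖1 - ee x‖ = 2 * |Real.sin (Real.pi * x)| := by
  have h : ee x = Complex.exp (((2 * Real.pi * x : ℝ) : ℂ) * Complex.I) := by
    rw [ee]; congr 1; push_cast; ring
  rw [h, Complex.exp_mul_I, ← Complex.ofReal_cos, ← Complex.ofReal_sin]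
  have h2 : (1 : ℂ) - (↑(Real.cos (2 * Real.pi * x)) + ↑(Real.sin (2 * Real.pi * x)) * Complex.I)
      = ↑(1 - Real.cos (2 * Real.pi * x)) + ↑(-Real.sin (2 * Real.pi * x)) * Complex.I := by
    push_cast; ring
  rw [h2, Complex.norm_add_mul_I]
  have hs : Real.sin (Real.pi * x) ^ 2 = 1 / 2 - Real.cos (2 * (Real.pi * x)) / 2 :=
    Real.sin_sq_eq_half_sub _
  have h3 : (1 - Real.cos (2 * Real.pi * x)) ^ 2 + (-Real.sin (2 * Real.pi * x)) ^ 2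
      = (2 * |Real.sin (Real.pi * x)|) ^ 2 := by
    have h4 : (2 * (Real.pi * x)) = 2 * Real.pi * x := by ring
    rw [h4] at hs
    nlinarith [Real.sin_sq_add_cos_sq (2 * Real.pi * x), hs,
      _root_.sq_abs (Real.sin (Real.pi * x))]
  rw [h3, Real.sqrt_sq (by positivity)]

lemma four_mul_abs_sub_round_le (x : ℝ) : 4 * |x - round x| ≤ ‖1 - ee x‖ := by
  have hx : ee x = ee (x - round x) := by
    conv_lhs => rw [show x = (x - (round x : ℝ)) + ((round x : ℤ) : ℝ) from by push_cast; ring]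
    rw [ee_add, ee_int, mul_one]
  rw [hx, abs_one_sub_ee]
  set t := x - (round x : ℝ) with ht
  have htle : |t| ≤ 1 / 2 := abs_sub_round x
  have h1 : |Real.pi * t| ≤ Real.pi / 2 := by
    rw [abs_mul, abs_of_pos Real.pi_pos]
    nlinarith [Real.pi_pos]
  have h2 := Real.mul_abs_le_abs_sin h1
  rw [abs_mul, abs_of_pos Real.pi_pos] at h2
  have hπ : 2 / Real.pi * (Real.pi * |t|) = 2 * |t| := by
    field_simp
  rw [hπ] at h2
  linarith

lemma denom_est (x : ℝ) (c : ℝ) (hc : 0 < c) (h : c⁻¹ ≤ |x - round x|) :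
    (1 - ee x) ≠ 0 ∧ ‖(1 - ee x)⁻¹‖ ≤ c / 4 := by
  have h1 := four_mul_abs_sub_round_le x
  have hpos : 4 * c⁻¹ ≤ ‖1 - ee x‖ := by
    calc 4 * c⁻¹ ≤ 4 * |x - round x| := by linarith
    _ ≤ _ := h1
  have hpos' : 0 < ‖1 - ee x‖ := lt_of_lt_of_le (by positivity) hpos
  have hne : (1 - ee x) ≠ 0 := by
    intro h0
    rw [h0] at hpos'; simp at hpos'
  refine ⟨hne, ?_⟩
  rw [norm_inv]
  rw [inv_le_comm₀ hpos' (by positivity)]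
  calc (c / 4)⁻¹ = 4 * c⁻¹ := by
        rw [div_eq_mul_inv, mul_inv, mul_comm]
        norm_num
  _ ≤ _ := hpos

lemma summable_exp_int (c : ℝ) (hc : 0 < c) :
    Summable (fun n : ℤ => Real.exp (-c * |(n : ℝ)|)) := by
  have key : Summable (fun n : ℕ => Real.exp (-c) ^ n) :=
    summable_geometric_of_lt_one (Real.exp_nonneg _) (Real.exp_lt_one_iff.mpr (by linarith))
  apply Summable.of_nat_of_neg <;>
  · refine key.congr fun n => ?_
    rw [← Real.exp_nat_mul]
    congr 1
    push_cast
    simp only [abs_neg, Nat.abs_cast]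
    ring

lemma summable_exp_pi (ℓ : ℕ) (c : ℝ) (hc : 0 < c) :
    Summable (fun k : Fin ℓ → ℤ => Real.exp (-c * ∑ i, |(k i : ℝ)|)) := by
  induction ℓ with
  | zero => exact .of_finite
  | succ n ih =>
    have h := (summable_exp_int c hc).mul_of_nonneg ih
      (fun _ => (Real.exp_pos _).le) (fun _ => (Real.exp_pos _).le)
    refine ((Fin.consEquiv (fun _ : Fin (n+1) => ℤ)).summable_iff).mp (h.congr ?_)
    rintro ⟨a, g⟩
    show Real.exp (-c * |(a : ℝ)|) * Real.exp (-c * ∑ i, |(g i : ℝ)|) = _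
    rw [← Real.exp_add]
    have : ∑ i, |((Fin.consEquiv (fun _ : Fin (n+1) => ℤ)) (a, g) i : ℝ)|
        = |(a : ℝ)| + ∑ i, |(g i : ℝ)| := by
      rw [Fin.sum_univ_succ]
      simp [Fin.consEquiv]
    simp only [Function.comp]
    rw [this]
    ring_nf

lemma rpow_mul_exp_le (τ δ : ℝ) (hδ : 0 < δ) (s : ℝ) (hs : 1 ≤ s) :
    s ^ τ * Real.exp (-δ * s) ≤
      Nat.factorial (Nat.ceil τ) * (2 / δ) ^ (Nat.ceil τ) * Real.exp (-(δ / 2) * s) := by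
  set m := Nat.ceil τ with hm
  have hs0 : 0 < s := lt_of_lt_of_le one_pos hs
  have h1 : s ^ τ ≤ s ^ (m : ℕ) := by
    rw [← Real.rpow_natCast s m]
    exact Real.rpow_le_rpow_of_exponent_le hs (Nat.le_ceil τ)
  have hx : 0 ≤ δ / 2 * s := by positivity
  have h2 : (δ / 2 * s) ^ m / m.factorial ≤ Real.exp (δ / 2 * s) := by
    refine le_trans ?_ (Real.sum_le_exp_of_nonneg hx (m + 1))
    refine Finset.single_le_sum (f := fun i => (δ / 2 * s) ^ i / i.factorial) ?_
      (Finset.self_mem_range_succ m)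
    intro i _
    positivity
  have h3 : s ^ (m : ℕ) ≤ m.factorial * (2 / δ) ^ m * Real.exp (δ / 2 * s) := by
    have e1 : s ^ (m : ℕ) = (2 / δ) ^ m * (δ / 2 * s) ^ m := by
      rw [mul_pow, ← mul_assoc, ← mul_pow]
      have : (2 / δ) * (δ / 2) = 1 := by field_simp
      rw [this, one_pow, one_mul]
    rw [e1]
    have h4 : (δ / 2 * s) ^ m ≤ m.factorial * Real.exp (δ / 2 * s) := by
      rw [div_le_iff₀ (by positivity : (0:ℝ) < (m.factorial : ℝ))] at h2
      linarith [h2]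
    calc (2 / δ) ^ m * (δ / 2 * s) ^ m ≤ (2 / δ) ^ m * (m.factorial * Real.exp (δ / 2 * s)) := by
          apply mul_le_mul_of_nonneg_left h4 (by positivity)
      _ = m.factorial * (2 / δ) ^ m * Real.exp (δ / 2 * s) := by ring
  calc s ^ τ * Real.exp (-δ * s) ≤ s ^ (m : ℕ) * Real.exp (-δ * s) :=
        mul_le_mul_of_nonneg_right h1 (Real.exp_nonneg _)
    _ ≤ (m.factorial * (2 / δ) ^ m * Real.exp (δ / 2 * s)) * Real.exp (-δ * s) :=
        mul_le_mul_of_nonneg_right h3 (Real.exp_nonneg _)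
    _ = m.factorial * (2 / δ) ^ m * Real.exp (-(δ / 2) * s) := by
        rw [mul_assoc, ← Real.exp_add, show δ / 2 * s + -δ * s = -(δ / 2) * s by ring]



/-- For a Diophantine frequency `ω ∈ D(ν,τ)` and a function `η` given by
an absolutely convergent Fourier series with zero average and exponentially decaying
coefficients, the series `φ(θ) = Σ_{k≠0} η̂_k (1 − e^{2πi k·ω})⁻¹ e^{2πi k·θ}` converges
absolutely and uniformly, defines a continuous `ℤ^ℓ`-periodic function, and solves
`φ(θ) − φ(θ+ω) = η(θ)`.  (Since `η̂_0 = 0` and Lean's junk value conventions make the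
`k = 0` term vanish, the sum may be taken over all of `ℤ^ℓ`.) -/
theorem stmt1 (ℓ : ℕ) (ν τ M δ : ℝ) (hν : 0 < ν) (hM : 0 < M) (hδ : 0 < δ)
    (ω : Fin ℓ → ℝ)
    (hdio : ∀ k : Fin ℓ → ℤ, k ≠ 0 → ∀ n : ℤ,
      (ν * (∑ i, |(k i : ℝ)|) ^ τ)⁻¹ ≤ |(∑ i, (k i : ℝ) * ω i) - (n : ℝ)|)
    (ηhat : (Fin ℓ → ℤ) → ℂ) (hη0 : ηhat 0 = 0)
    (hdecay : ∀ k : Fin ℓ → ℤ,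
      ‖ηhat k‖ ≤ M * Real.exp (-δ * (∑ i, |(k i : ℝ)|)))
    (η : (Fin ℓ → ℝ) → ℂ)
    (hηsum : ∀ θ : Fin ℓ → ℝ, HasSum (fun k : Fin ℓ → ℤ =>
      ηhat k * Complex.exp (((2 * Real.pi : ℝ) : ℂ) * Complex.I *
        ((∑ i, (k i : ℝ) * θ i : ℝ) : ℂ))) (η θ)) :
    ∃ φ : (Fin ℓ → ℝ) → ℂ,
      (∀ θ, Summable (fun k : Fin ℓ → ℤ => ‖phiTerm ℓ ηhat ω k θ‖)) ∧
      (∀ θ, HasSum (fun k : Fin ℓ → ℤ => phiTerm ℓ ηhat ω k θ) (φ θ)) ∧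
      TendstoUniformly
        (fun (s : Finset (Fin ℓ → ℤ)) (θ : Fin ℓ → ℝ) => ∑ k ∈ s, phiTerm ℓ ηhat ω k θ)
        φ Filter.atTop ∧
      Continuous φ ∧
      (∀ (θ : Fin ℓ → ℝ) (e : Fin ℓ → ℤ), φ (θ + fun i => (e i : ℝ)) = φ θ) ∧
      (∀ θ, φ θ - φ (θ + ω) = η θ) := by
  classical
  set S : (Fin ℓ → ℤ) → ℝ := fun k => ∑ i, |(k i : ℝ)| with hS
  set x : (Fin ℓ → ℤ) → ℝ := fun k => ∑ i, (k i : ℝ) * ω i with hx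
  have hphi : ∀ (k : Fin ℓ → ℤ) (θ : Fin ℓ → ℝ),
      phiTerm ℓ ηhat ω k θ = ηhat k * (1 - ee (x k))⁻¹ * ee (∑ i, (k i : ℝ) * θ i) :=
    fun k θ => rfl
  have hS1 : ∀ k : Fin ℓ → ℤ, k ≠ 0 → 1 ≤ S k := by
    intro k hk
    obtain ⟨j, hj⟩ := Function.ne_iff.mp hk
    calc (1 : ℝ) ≤ |(k j : ℝ)| := by
          rw [← Int.cast_abs]
          exact_mod_cast Int.one_le_abs (by simpa using hj)
    _ ≤ S k := Finset.single_le_sum (f := fun i => |(k i : ℝ)|) (fun i _ => abs_nonneg _) (Finset.mem_univ j)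
  have hcpos : ∀ k : Fin ℓ → ℤ, k ≠ 0 → 0 < ν * S k ^ τ := by
    intro k hk
    have h1 := hS1 k hk
    have h2 : (0 : ℝ) < S k ^ τ := Real.rpow_pos_of_pos (by linarith) τ
    exact mul_pos hν h2
  have hden : ∀ k : Fin ℓ → ℤ, k ≠ 0 →
      (1 - ee (x k)) ≠ 0 ∧ ‖(1 - ee (x k))⁻¹‖ ≤ ν * S k ^ τ / 4 :=
    fun k hk => denom_est (x k) _ (hcpos k hk) (hdio k hk (round (x k)))
  set u : (Fin ℓ → ℤ) → ℝ := fun k => ‖ηhat k‖ * ‖(1 - ee (x k))⁻¹‖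
    with hu
  have hnorm : ∀ k θ, ‖phiTerm ℓ ηhat ω k θ‖ = u k := by
    intro k θ
    rw [hphi, norm_mul, norm_mul, ee_abs, mul_one]
  set C : ℝ := M * (ν / 4) * ((Nat.ceil τ).factorial * (2 / δ) ^ Nat.ceil τ) with hC
  have hub : ∀ k, u k ≤ C * Real.exp (-(δ / 2) * S k) := by
    intro k
    by_cases hk : k = 0
    · subst hk
      have : u 0 = 0 := by simp [hu, hη0]
      rw [this]
      positivity
    · have h1 := hdecay k
      have h2 := (hden k hk).2
      have h3 := hS1 k hk
      calc u k ≤ (M * Real.exp (-δ * S k)) * (ν * S k ^ τ / 4) :=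
            mul_le_mul h1 h2 (norm_nonneg _) (by positivity)
      _ = M * (ν / 4) * (S k ^ τ * Real.exp (-δ * S k)) := by ring
      _ ≤ M * (ν / 4) *
            ((Nat.ceil τ).factorial * (2 / δ) ^ Nat.ceil τ * Real.exp (-(δ / 2) * S k)) :=
            mul_le_mul_of_nonneg_left (rpow_mul_exp_le τ δ hδ (S k) h3) (by positivity)
      _ = C * Real.exp (-(δ / 2) * S k) := by rw [hC]; ring
  have husum : Summable u := by
    refine Summable.of_nonneg_of_le (fun k => by positivity) hub ?_
    exact (summable_exp_pi ℓ (δ / 2) (by linarith)).mul_left C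
  have hsum : ∀ θ, Summable fun k => ‖phiTerm ℓ ηhat ω k θ‖ :=
    fun θ => husum.congr fun k => (hnorm k θ).symm
  refine ⟨fun θ => ∑' k, phiTerm ℓ ηhat ω k θ, hsum, ?_, ?_, ?_, ?_, ?_⟩
  · exact fun θ => ((hsum θ).of_norm).hasSum
  · exact tendstoUniformly_tsum husum (fun k θ => (hnorm k θ).le)
  · refine continuous_tsum (fun k => ?_) husum (fun k θ => (hnorm k θ).le)
    unfold phiTerm
    fun_prop
  · intro θ e
    refine tsum_congr fun k => ?_
    rw [hphi, hphi]
    have h1 : (∑ i, (k i : ℝ) * ((θ + fun i => ((e i : ℤ) : ℝ)) i))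
        = (∑ i, (k i : ℝ) * θ i) + ((∑ i, k i * e i : ℤ) : ℝ) := by
      push_cast
      rw [← Finset.sum_add_distrib]
      refine Finset.sum_congr rfl fun i _ => ?_
      simp only [Pi.add_apply]
      ring
    rw [h1, ee_add, ee_int, mul_one]
  · intro θ
    have h1 : HasSum (fun k => phiTerm ℓ ηhat ω k θ) (∑' k, phiTerm ℓ ηhat ω k θ) :=
      ((hsum θ).of_norm).hasSum
    have h2 : HasSum (fun k => phiTerm ℓ ηhat ω k (θ + ω))
        (∑' k, phiTerm ℓ ηhat ω k (θ + ω)) := ((hsum (θ + ω)).of_norm).hasSum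
    have h3 := h1.sub h2
    have h4 : ∀ k, phiTerm ℓ ηhat ω k θ - phiTerm ℓ ηhat ω k (θ + ω)
        = ηhat k * ee (∑ i, (k i : ℝ) * θ i) := by
      intro k
      by_cases hk : k = 0
      · subst hk
        rw [hphi, hphi, hη0]
        ring
      · rw [hphi, hphi]
        have hω : (∑ i, (k i : ℝ) * ((θ + ω) i)) = (∑ i, (k i : ℝ) * θ i) + x k := by
          rw [hx]
          rw [← Finset.sum_add_distrib]
          refine Finset.sum_congr rfl fun i _ => ?_
          simp only [Pi.add_apply]
          ring
        rw [hω, ee_add]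
        have hne := (hden k hk).1
        field_simp
    have h5 : HasSum (fun k => ηhat k * ee (∑ i, (k i : ℝ) * θ i))
        ((∑' k, phiTerm ℓ ηhat ω k θ) - ∑' k, phiTerm ℓ ηhat ω k (θ + ω)) := by
      exact (funext h4 : _) ▸ h3
    exact h5.unique (hηsum θ)
end

section
/- Let ω ∈ D(ν,τ) and let a: ℝ^ℓ → (0,∞) be ℤ^ℓ-periodic and given by log a(θ) = Σ_{k∈ℤ^ℓ} c_k e^{2πi k·θ}, an absolutely convergent Fourier series with real-valued sum, whose coefficients satisfy |c_k| ≤ M e^{−δ|k|} for some M > 0, δ > 0. Set λ = c_0 (the average of log a over T^ℓ) and ν = e^λ. Then there exists a continuous, positive, ℤ^ℓ-periodic function C: ℝ^ℓ → (0,∞) such that a(θ) = ν C(θ)/C(θ + ω) for every θ ∈ ℝ^ℓ. -/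
noncomputable def auxE (x : ℝ) : ℂ :=
  Complex.exp (((2 * Real.pi : ℝ) : ℂ) * Complex.I * (x : ℂ))

def auxS (ℓ : ℕ) (k : Fin ℓ → ℤ) (θ : Fin ℓ → ℝ) : ℝ := ∑ i, (k i : ℝ) * θ i

lemma auxE_abs (x : ℝ) : ‖auxE x‖ = 1 := by
  rw [auxE, Complex.norm_exp]
  have : (((2 * Real.pi : ℝ) : ℂ) * Complex.I * (x : ℂ)).re = 0 := by
    simp [Complex.mul_re, Complex.mul_im]
  rw [this, Real.exp_zero]

lemma auxE_add (x y : ℝ) : auxE (x + y) = auxE x * auxE y := by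
  rw [auxE, auxE, auxE, ← Complex.exp_add]
  congr 1
  push_cast
  ring

lemma auxE_int (n : ℤ) : auxE (n : ℝ) = 1 := by
  rw [auxE, ← Complex.exp_int_mul_two_pi_mul_I n]
  congr 1
  push_cast
  ring

lemma auxE_zero : auxE 0 = 1 := by
  simpa using auxE_int 0

lemma auxE_cont : Continuous auxE := by
  unfold auxE; fun_prop

lemma auxE_ne (x : ℝ) : auxE x ≠ 0 := Complex.exp_ne_zero _

lemma auxS_add (ℓ : ℕ) (k : Fin ℓ → ℤ) (θ η : Fin ℓ → ℝ) :
    auxS ℓ k (θ + η) = auxS ℓ k θ + auxS ℓ k η := by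
  simp [auxS, mul_add, Finset.sum_add_distrib]

lemma auxS_zero (ℓ : ℕ) (θ : Fin ℓ → ℝ) : auxS ℓ 0 θ = 0 := by simp [auxS]

lemma auxS_int (ℓ : ℕ) (k e : Fin ℓ → ℤ) :
    auxS ℓ k (fun i => (e i : ℝ)) = ((∑ i, k i * e i : ℤ) : ℝ) := by
  simp [auxS]

lemma auxS_cont (ℓ : ℕ) (k : Fin ℓ → ℤ) : Continuous (auxS ℓ k) := by
  unfold auxS
  exact continuous_finset_sum _ fun i _ => (continuous_const.mul (continuous_apply i))

lemma auxE_per (x : ℝ) (n : ℤ) : auxE (x + n) = auxE x := by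
  rw [auxE_add, auxE_int, mul_one]

lemma aux_pow_le_exp (m : ℕ) (x : ℝ) (hx : 0 ≤ x) :
    x ^ m ≤ m.factorial * Real.exp x := by
  have h := Real.sum_le_exp_of_nonneg hx (m+1)
  have h2 : x ^ m / m.factorial ≤ Real.exp x := by
    refine le_trans ?_ h
    exact Finset.single_le_sum (f := fun i => x ^ i / Nat.factorial i)
      (fun i _ => by positivity) (Finset.self_mem_range_succ m)
  have hf : (0:ℝ) < m.factorial := by positivity
  rw [div_le_iff₀ hf] at h2
  linarith [h2]

lemma aux_summable_pi (ℓ : ℕ) (r : ℝ) (h0 : 0 ≤ r) (h1 : r < 1) :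
    Summable (fun k : Fin ℓ → ℤ => ∏ i, r ^ (k i).natAbs) := by
  induction ℓ with
  | zero =>
    simpa using (summable_of_finite_support (Set.toFinite _) :
      Summable (fun _ : Fin 0 → ℤ => (1:ℝ)))
  | succ n ih =>
    have hz : Summable (fun m : ℤ => r ^ m.natAbs) := by
      apply Summable.of_nat_of_neg <;> simpa using summable_geometric_of_lt_one h0 h1
    have h1' : 0 ≤ (fun m : ℤ => r ^ m.natAbs) := fun m => by positivity
    have h2' : 0 ≤ (fun k : Fin n → ℤ => ∏ i, r ^ (k i).natAbs) := fun k => by positivity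
    have hprod := Summable.mul_of_nonneg hz ih h1' h2'
    have := (((Fin.consEquiv fun _ => ℤ).symm).summable_iff
      (f := fun p : ℤ × (Fin n → ℤ) => r ^ p.1.natAbs * ∏ i, r ^ (p.2 i).natAbs)).2 hprod
    refine this.congr fun k => ?_
    simp [Fin.consEquiv, Fin.prod_univ_succ, Fin.tail]

lemma aux_abs_one_sub_exp (y : ℝ) :
    (Real.cos y ≤ 0 → 1 ≤ ‖1 - Complex.exp ((y : ℂ) * Complex.I)‖)
    ∧ |Real.sin y| ≤ ‖1 - Complex.exp ((y : ℂ) * Complex.I)‖ := by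
  rw [Complex.exp_mul_I, ← Complex.ofReal_cos, ← Complex.ofReal_sin]
  have hre : (1 - (((Real.cos y : ℝ):ℂ) + ((Real.sin y : ℝ):ℂ) * Complex.I)).re
      = 1 - Real.cos y := by simp [Complex.cos_ofReal_re]
  have him : (1 - (((Real.cos y : ℝ):ℂ) + ((Real.sin y : ℝ):ℂ) * Complex.I)).im
      = - Real.sin y := by simp [Complex.sin_ofReal_re]
  have h1 : |(- Real.sin y)| ≤ ‖_‖ := him ▸ Complex.abs_im_le_norm _
  have h2 : |(1 - Real.cos y)| ≤ ‖_‖ := hre ▸ Complex.abs_re_le_norm _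
  rw [abs_neg] at h1
  refine ⟨fun hc => ?_, h1⟩
  refine le_trans ?_ h2
  rw [le_abs]; left; linarith

lemma aux_lower (x : ℝ) (hx : |x| ≤ 1/2) :
    2 * |x| ≤ ‖1 - auxE x‖ := by
  have hpi := Real.pi_pos
  have hpi' := Real.pi_gt_three
  have hexp : auxE x = Complex.exp (((2 * Real.pi * x : ℝ) : ℂ) * Complex.I) := by
    rw [auxE]; congr 1; push_cast; ring
  rw [hexp]
  obtain ⟨hcos, hsin⟩ := aux_abs_one_sub_exp (2 * Real.pi * x)
  rcases le_or_gt (|x|) (1/4) with h4 | h4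
  · refine le_trans ?_ hsin
    have hsabs : |Real.sin (2*Real.pi*x)| = |Real.sin (2*Real.pi*|x|)| := by
      rcases abs_cases x with ⟨h, _⟩ | ⟨h, _⟩
      · rw [h]
      · rw [h, show 2*Real.pi*(-x) = -(2*Real.pi*x) by ring, Real.sin_neg, abs_neg]
    rw [hsabs]
    have h0 : 0 ≤ 2*Real.pi*|x| := by positivity
    have h2 : 2*Real.pi*|x| ≤ Real.pi/2 := by nlinarith [abs_nonneg x]
    have hms := Real.mul_le_sin h0 h2
    have hs0 : 0 ≤ Real.sin (2*Real.pi*|x|) := le_trans (by positivity) hms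
    rw [abs_of_nonneg hs0]
    refine le_trans ?_ hms
    rw [div_mul_eq_mul_div, le_div_iff₀ hpi]
    nlinarith [abs_nonneg x]
  · have hc : Real.cos (2*Real.pi*x) ≤ 0 := by
      have hceq : Real.cos (2*Real.pi*x) = Real.cos (2*Real.pi*|x|) := by
        rcases abs_cases x with ⟨h, _⟩ | ⟨h, _⟩
        · rw [h]
        · rw [h, show 2*Real.pi*(-x) = -(2*Real.pi*x) by ring, Real.cos_neg]
      rw [hceq]
      apply Real.cos_nonpos_of_pi_div_two_le_of_le <;> nlinarith
    refine le_trans ?_ (hcos hc)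
    linarith

/-- Let `ω` be Diophantine of class `D(ν,τ)` and let
`a : ℝ^ℓ → (0,∞)` be `ℤ^ℓ`-periodic with `log a` given by an absolutely convergent
Fourier series `log a(θ) = Σ_k c_k e^{2πi k·θ}` (real-valued sum) whose coefficients
decay exponentially.  With `λ = c₀` and multiplier `e^λ`, there is a continuous,
positive, `ℤ^ℓ`-periodic function `C` with `a(θ) = e^λ C(θ)/C(θ+ω)` for all `θ`. -/
theorem stmt6 (ℓ : ℕ) (ν τ M δ : ℝ) (hν : 0 < ν) (hM : 0 < M) (hδ : 0 < δ)
    (ω : Fin ℓ → ℝ)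
    (hdio : ∀ k : Fin ℓ → ℤ, k ≠ 0 → ∀ n : ℤ,
      (ν * (∑ i, |(k i : ℝ)|) ^ τ)⁻¹ ≤ |(∑ i, (k i : ℝ) * ω i) - (n : ℝ)|)
    (a : (Fin ℓ → ℝ) → ℝ) (hapos : ∀ θ, 0 < a θ)
    (haper : ∀ (θ : Fin ℓ → ℝ) (e : Fin ℓ → ℤ), a (θ + fun i => (e i : ℝ)) = a θ)
    (c : (Fin ℓ → ℤ) → ℂ)
    (hdecay : ∀ k : Fin ℓ → ℤ,
      ‖c k‖ ≤ M * Real.exp (-δ * (∑ i, |(k i : ℝ)|)))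
    (hsum : ∀ θ : Fin ℓ → ℝ, HasSum (fun k : Fin ℓ → ℤ =>
      c k * Complex.exp (((2 * Real.pi : ℝ) : ℂ) * Complex.I *
        ((∑ i, (k i : ℝ) * θ i : ℝ) : ℂ))) ((Real.log (a θ) : ℂ))) :
    ∃ C : (Fin ℓ → ℝ) → ℝ,
      Continuous C ∧ (∀ θ, 0 < C θ) ∧
      (∀ (θ : Fin ℓ → ℝ) (e : Fin ℓ → ℤ), C (θ + fun i => (e i : ℝ)) = C θ) ∧
      (∀ θ, (a θ : ℂ) = Complex.exp (c 0) * (C θ : ℂ) / (C (θ + ω) : ℂ)) := by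
  classical
  set q : ℝ := Real.exp (-(δ/2)) with hqdef
  have hq0 : 0 ≤ q := (Real.exp_pos _).le
  have hq1 : q < 1 := by
    rw [hqdef, Real.exp_lt_one_iff]
    linarith
  -- the ℓ¹ norm of a nonzero integer vector is at least 1
  have hnk1 : ∀ k : Fin ℓ → ℤ, k ≠ 0 → (1:ℝ) ≤ ∑ i, |(k i : ℝ)| := by
    intro k hk
    obtain ⟨i, hi⟩ := Function.ne_iff.1 hk
    have h1 : (1:ℝ) ≤ |(k i : ℝ)| := by
      have := Int.one_le_abs hi
      rw [← Int.cast_abs]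
      exact_mod_cast this
    refine le_trans h1 ?_
    exact Finset.single_le_sum (f := fun j => |(k j : ℝ)|) (fun j _ => abs_nonneg _) (Finset.mem_univ i)
  have hpos : ∀ k : Fin ℓ → ℤ, k ≠ 0 → 0 < ν * (∑ i, |(k i : ℝ)|) ^ τ := by
    intro k hk
    have := hnk1 k hk
    have : (0:ℝ) < (∑ i, |(k i : ℝ)|) ^ τ := Real.rpow_pos_of_pos (by linarith) τ
    positivity
  -- lower bound on the denominators
  have hden : ∀ k : Fin ℓ → ℤ, k ≠ 0 →
      2 * (ν * (∑ i, |(k i : ℝ)|) ^ τ)⁻¹ ≤ ‖1 - auxE (auxS ℓ k ω)‖ := by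
    intro k hk
    have hdi : (ν * (∑ i, |(k i : ℝ)|) ^ τ)⁻¹
        ≤ |auxS ℓ k ω - ((round (auxS ℓ k ω) : ℤ) : ℝ)| := hdio k hk (round (auxS ℓ k ω))
    have hr : |auxS ℓ k ω - ((round (auxS ℓ k ω) : ℤ) : ℝ)| ≤ 1/2 := abs_sub_round _
    have h3 := aux_lower _ hr
    have h4 : auxE (auxS ℓ k ω)
        = auxE (auxS ℓ k ω - ((round (auxS ℓ k ω) : ℤ) : ℝ)) := by
      conv_lhs => rw [show auxS ℓ k ω = (auxS ℓ k ω - ((round (auxS ℓ k ω) : ℤ) : ℝ))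
        + ((round (auxS ℓ k ω) : ℤ) : ℝ) by ring]
      rw [auxE_per]
    rw [h4]
    refine le_trans ?_ h3
    linarith
  have hden_ne : ∀ k : Fin ℓ → ℤ, k ≠ 0 → (1 - auxE (auxS ℓ k ω)) ≠ 0 := by
    intro k hk
    have h1 := hden k hk
    have h2 : 0 < 2 * (ν * (∑ i, |(k i : ℝ)|) ^ τ)⁻¹ := by
      have := hpos k hk; positivity
    intro h
    rw [h, norm_zero] at h1
    linarith
  set d : (Fin ℓ → ℤ) → ℂ :=
    fun k => if k = 0 then 0 else c k / (1 - auxE (auxS ℓ k ω)) with hddef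
  have hcancel : ∀ k : Fin ℓ → ℤ, k ≠ 0 → d k * (1 - auxE (auxS ℓ k ω)) = c k := by
    intro k hk
    rw [hddef]
    simp only [if_neg hk]
    exact div_mul_cancel₀ (c k) (hden_ne k hk)
  set m : ℕ := ⌈τ⌉₊ with hmdef
  set B : ℝ := M * ν * m.factorial * (2/δ)^m / 2 with hBdef
  have hB : 0 < B := by
    rw [hBdef]
    have : (0:ℝ) < m.factorial := by positivity
    positivity
  -- the exponential product identity
  have hprodq : ∀ k : Fin ℓ → ℤ,
      Real.exp (-(δ/2) * ∑ i, |(k i : ℝ)|) = ∏ i, q ^ (k i).natAbs := by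
    intro k
    rw [Finset.mul_sum, Real.exp_sum]
    refine Finset.prod_congr rfl fun i _ => ?_
    have h1 : ((k i).natAbs : ℝ) = |(k i : ℝ)| := by
      rw [Nat.cast_natAbs, Int.cast_abs]
    rw [← h1, show -(δ/2) * ((k i).natAbs : ℝ) = ((k i).natAbs : ℝ) * (-(δ/2)) by ring,
      Real.exp_nat_mul]
  -- the coefficient bound
  have hbound : ∀ k : Fin ℓ → ℤ, ‖d k‖ ≤ B * ∏ i, q ^ (k i).natAbs := by
    intro k
    rcases eq_or_ne k 0 with rfl | hk
    · have hd0 : d 0 = 0 := by rw [hddef]; simp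
      rw [hd0, norm_zero]
      exact mul_nonneg hB.le (by positivity)
    · set nk : ℝ := ∑ i, |(k i : ℝ)| with hnkdef
      have h1 : 1 ≤ nk := hnk1 k hk
      have hp : 0 < ν * nk ^ τ := hpos k hk
      have habs := hden k hk
      have hpos2 : 0 < ‖1 - auxE (auxS ℓ k ω)‖ := by
        refine lt_of_lt_of_le ?_ habs
        positivity
      have hC : ‖d k‖
          = ‖c k‖ / ‖1 - auxE (auxS ℓ k ω)‖ := by
        rw [hddef]; simp only [if_neg hk]; rw [norm_div]
      have step1 : ‖d k‖ ≤ ‖c k‖ * (ν * nk ^ τ) / 2 := by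
        rw [hC, div_le_div_iff₀ hpos2 (by norm_num : (0:ℝ) < 2)]
        have hinv : (ν * nk ^ τ) * (2 * (ν * nk ^ τ)⁻¹) = 2 := by
          field_simp
        nlinarith [norm_nonneg (c k), mul_le_mul_of_nonneg_left habs
          (le_of_lt hp)]
      have step2 : ‖c k‖ ≤ M * Real.exp (-δ * nk) := hdecay k
      have step3 : nk ^ τ ≤ nk ^ (m:ℕ) := by
        rw [← Real.rpow_natCast nk m]
        exact Real.rpow_le_rpow_of_exponent_le h1 (by exact_mod_cast Nat.le_ceil τ)
      have step4 : nk ^ (m:ℕ) ≤ (2/δ)^m * (m.factorial * Real.exp (δ/2 * nk)) := by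
        have haux := aux_pow_le_exp m (δ/2 * nk) (by positivity)
        have heq : nk ^ (m:ℕ) = (2/δ)^m * (δ/2 * nk)^m := by
          rw [← mul_pow]
          congr 1
          field_simp
        rw [heq]
        exact mul_le_mul_of_nonneg_left haux (by positivity)
      have hfin : M * Real.exp (-δ*nk) * (ν * ((2/δ)^m * (m.factorial * Real.exp (δ/2*nk)))) / 2
          = B * Real.exp (-(δ/2)*nk) := by
        rw [hBdef, show -(δ/2)*nk = -δ*nk + δ/2*nk by ring, Real.exp_add]
        ring
      calc ‖d k‖ ≤ ‖c k‖ * (ν * nk ^ τ) / 2 := step1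
        _ ≤ (M * Real.exp (-δ*nk)) * (ν * nk ^ τ) / 2 := by
            have hnkτ : (0:ℝ) ≤ nk ^ τ := le_of_lt (Real.rpow_pos_of_pos (by linarith) τ)
            gcongr
        _ ≤ (M * Real.exp (-δ*nk)) * (ν * ((2/δ)^m * (m.factorial * Real.exp (δ/2*nk)))) / 2 := by
            have h57 := step3.trans step4
            gcongr
        _ = B * Real.exp (-(δ/2)*nk) := hfin
        _ = B * ∏ i, q ^ (k i).natAbs := by rw [hprodq k]
  -- summability
  have hsummable_maj : Summable (fun k : Fin ℓ → ℤ => B * ∏ i, q ^ (k i).natAbs) :=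
    (aux_summable_pi ℓ q hq0 hq1).mul_left B
  have hd_abs : Summable (fun k : Fin ℓ → ℤ => ‖d k‖) :=
    Summable.of_nonneg_of_le (fun k => norm_nonneg _) hbound hsummable_maj
  have hterm_norm : ∀ (θ : Fin ℓ → ℝ) (k : Fin ℓ → ℤ),
      ‖d k * auxE (auxS ℓ k θ)‖ = ‖d k‖ := by
    intro θ k
    rw [norm_mul, auxE_abs, mul_one]
  have hsumd : ∀ θ : Fin ℓ → ℝ, Summable (fun k : Fin ℓ → ℤ => d k * auxE (auxS ℓ k θ)) := by
    intro θ
    refine Summable.of_norm ?_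
    exact hd_abs.congr fun k => (hterm_norm θ k).symm
  set U : (Fin ℓ → ℝ) → ℂ := fun θ => ∑' k : Fin ℓ → ℤ, d k * auxE (auxS ℓ k θ) with hUdef
  have hUsum : ∀ θ, HasSum (fun k : Fin ℓ → ℤ => d k * auxE (auxS ℓ k θ)) (U θ) :=
    fun θ => (hsumd θ).hasSum
  have hUcont : Continuous U := by
    rw [hUdef]
    refine continuous_tsum (f := fun (k : Fin ℓ → ℤ) (θ : Fin ℓ → ℝ) => d k * auxE (auxS ℓ k θ))
      (fun k => ?_) hd_abs (fun k θ => le_of_eq (hterm_norm θ k))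
    exact continuous_const.mul (auxE_cont.comp (auxS_cont ℓ k))
  have hUper : ∀ (θ : Fin ℓ → ℝ) (e : Fin ℓ → ℤ), U (θ + fun i => (e i : ℝ)) = U θ := by
    intro θ e
    rw [hUdef]
    refine tsum_congr fun k => ?_
    rw [auxS_add, auxS_int, auxE_per]
  -- the key cohomological identity
  have hkey : ∀ θ : Fin ℓ → ℝ, U θ - U (θ + ω) = ((Real.log (a θ) : ℝ) : ℂ) - c 0 := by
    intro θ
    have h3 := (hUsum θ).sub (hUsum (θ + ω))
    have h4 : HasSum (fun k : Fin ℓ → ℤ => c k * auxE (auxS ℓ k θ))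
        ((Real.log (a θ) : ℂ)) := hsum θ
    have h5 := h4.sub (hasSum_ite_eq (0 : Fin ℓ → ℤ) (c 0))
    have h6 : (fun k : Fin ℓ → ℤ =>
        d k * auxE (auxS ℓ k θ) - d k * auxE (auxS ℓ k (θ + ω)))
        = fun k => c k * auxE (auxS ℓ k θ) - if k = 0 then c 0 else 0 := by
      funext k
      rcases eq_or_ne k 0 with rfl | hk
      · have hd0 : d 0 = 0 := by rw [hddef]; simp
        rw [hd0, auxS_zero, auxE_zero]
        simp
      · rw [if_neg hk, auxS_add ℓ k θ ω, auxE_add, sub_zero]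
        have h := hcancel k hk
        calc d k * auxE (auxS ℓ k θ) - d k * (auxE (auxS ℓ k θ) * auxE (auxS ℓ k ω))
            = (d k * (1 - auxE (auxS ℓ k ω))) * auxE (auxS ℓ k θ) := by ring
          _ = c k * auxE (auxS ℓ k θ) := by rw [h]
    rw [h6] at h3
    exact h3.unique h5
  -- a uniform bound for U
  have hT : ∀ θ : Fin ℓ → ℝ, |(U θ).im| ≤ ∑' k : Fin ℓ → ℤ, ‖d k‖ := by
    intro θ
    refine (Complex.abs_im_le_norm _).trans ?_
    rw [hUdef]
    have h2 := norm_tsum_le_tsum_norm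
      (f := fun k : Fin ℓ → ℤ => d k * auxE (auxS ℓ k θ))
      (hd_abs.congr fun k => (hterm_norm θ k).symm)
    refine le_trans h2 (le_of_eq ?_)
    exact tsum_congr fun k => hterm_norm θ k
  have hstep : ∀ θ : Fin ℓ → ℝ, (U (θ + ω)).im = (U θ).im + (c 0).im := by
    intro θ
    have h := congrArg Complex.im (hkey θ)
    simp only [Complex.sub_im, Complex.ofReal_im, zero_sub] at h
    linarith
  have him0 : (c 0).im = 0 := by
    by_contra ht
    have himpos : 0 < |(c 0).im| := abs_pos.2 ht
    have hTnn : (0:ℝ) ≤ ∑' k : Fin ℓ → ℤ, ‖d k‖ :=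
      tsum_nonneg fun k => norm_nonneg _
    have hn : ∀ n : ℕ, (U (fun i => (n:ℝ) * ω i)).im = (U 0).im + n * (c 0).im := by
      intro n
      induction n with
      | zero =>
        have h0 : (fun i => ((0:ℕ):ℝ) * ω i) = (0 : Fin ℓ → ℝ) := by funext i; simp
        rw [h0]; simp
      | succ n ih =>
        have harg : (fun i => ((n+1:ℕ):ℝ) * ω i) = (fun i => (n:ℝ) * ω i) + ω := by
          funext i
          simp only [Pi.add_apply]
          push_cast
          ring
        rw [harg, hstep, ih]
        push_cast
        ring
    obtain ⟨n, hn2⟩ := exists_nat_gt (2 * (∑' k : Fin ℓ → ℤ, ‖d k‖) / |(c 0).im|)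
    have h5 := hn n
    have h6 := hT (fun i => (n:ℝ) * ω i)
    have h7 := hT (0 : Fin ℓ → ℝ)
    have h8 : |(n:ℝ) * (c 0).im| ≤ 2 * (∑' k : Fin ℓ → ℤ, ‖d k‖) := by
      have : (n:ℝ) * (c 0).im = (U (fun i => (n:ℝ) * ω i)).im - (U 0).im := by
        rw [h5]; ring
      rw [this]
      calc |(U (fun i => (n:ℝ) * ω i)).im - (U 0).im|
          ≤ |(U (fun i => (n:ℝ) * ω i)).im| + |(U 0).im| := abs_sub _ _
        _ ≤ _ := by linarith
    rw [abs_mul, Nat.abs_cast] at h8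
    rw [div_lt_iff₀ himpos] at hn2
    linarith
  -- conclusion
  refine ⟨fun θ => Real.exp ((U θ).re), ?_, ?_, ?_, ?_⟩
  · exact Real.continuous_exp.comp (Complex.continuous_re.comp hUcont)
  · intro θ; exact Real.exp_pos _
  · intro θ e; simp only []; rw [hUper]
  · intro θ
    have hre := congrArg Complex.re (hkey θ)
    simp only [Complex.sub_re, Complex.ofReal_re] at hre
    have hc0 : Complex.exp (c 0) = ((Real.exp ((c 0).re) : ℝ) : ℂ) := by
      have h9 : c 0 = (((c 0).re : ℝ) : ℂ) := Complex.ext (by simp) (by simp [him0])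
      rw [Complex.ofReal_exp, ← h9]
    rw [hc0]
    rw [show ((Real.exp ((c 0).re) :ℝ):ℂ) * ((Real.exp ((U θ).re):ℝ):ℂ)
        / ((Real.exp ((U (θ+ω)).re):ℝ):ℂ)
        = ((Real.exp ((c 0).re) * Real.exp ((U θ).re) / Real.exp ((U (θ+ω)).re) : ℝ) : ℂ) by
      push_cast; ring]
    norm_cast
    rw [← Real.exp_add, ← Real.exp_sub]
    have h10 : (c 0).re + (U θ).re - (U (θ+ω)).re = Real.log (a θ) := by linarith
    rw [h10, Real.exp_log (hapos θ)]
end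

section
/- Let ω ∈ ℝ^ℓ; let A: ℝ^ℓ → GL(m,ℝ), B: ℝ^ℓ → M_{m'×m'}(ℝ) and η: ℝ^ℓ → M_{m×m'}(ℝ) be continuous and ℤ^ℓ-periodic with sup_θ ‖A(θ)^{−1}‖ · sup_θ ‖B(θ)‖ ≤ κ for some κ < 1. Then the series Δ(θ) = A(θ)^{−1} η(θ) + Σ_{k=1}^∞ A(θ)^{−1} A(θ+ω)^{−1} ··· A(θ+kω)^{−1} · η(θ+kω) · B(θ+(k−1)ω) ··· B(θ+ω) B(θ) converges absolutely and uniformly, defines a continuous ℤ^ℓ-periodic function, satisfies A(θ) Δ(θ) − Δ(θ+ω) B(θ) = η(θ) for all θ, and is the unique bounded solution of this equation. -/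
/-- Backward inverse products: `invProd Ainv ω k θ = A(θ)⁻¹ A(θ+ω)⁻¹ ⋯ A(θ+kω)⁻¹`
(`k+1` factors). -/
noncomputable def invProd {ℓ m : ℕ}
    (Ainv : (Fin ℓ → ℝ) → (Fin m → ℝ) →L[ℝ] (Fin m → ℝ)) (ω : Fin ℓ → ℝ) :
    ℕ → (Fin ℓ → ℝ) → ((Fin m → ℝ) →L[ℝ] (Fin m → ℝ))
  | 0, θ => Ainv θ
  | k + 1, θ => (Ainv θ).comp (invProd Ainv ω k (θ + ω))

/-- Forward products on the right factor: `bProd B ω k θ = B(θ+(k−1)ω) ⋯ B(θ+ω) B(θ)`,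
with `bProd B ω 0 θ = Id`. -/
noncomputable def bProd {ℓ m' : ℕ}
    (B : (Fin ℓ → ℝ) → (Fin m' → ℝ) →L[ℝ] (Fin m' → ℝ)) (ω : Fin ℓ → ℝ) :
    ℕ → (Fin ℓ → ℝ) → ((Fin m' → ℝ) →L[ℝ] (Fin m' → ℝ))
  | 0, _ => 1
  | k + 1, θ => (B (θ + (k : ℝ) • ω)).comp (bProd B ω k θ)

/-- The `k`-th term `A(θ)⁻¹ ⋯ A(θ+kω)⁻¹ η(θ+kω) B(θ+(k−1)ω) ⋯ B(θ)` of the series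
solving the twisted cohomology equation `A Δ − (Δ∘T_ω) B = η`. -/
noncomputable def twistTerm {ℓ m m' : ℕ}
    (Ainv : (Fin ℓ → ℝ) → (Fin m → ℝ) →L[ℝ] (Fin m → ℝ))
    (B : (Fin ℓ → ℝ) → (Fin m' → ℝ) →L[ℝ] (Fin m' → ℝ))
    (η : (Fin ℓ → ℝ) → (Fin m' → ℝ) →L[ℝ] (Fin m → ℝ)) (ω : Fin ℓ → ℝ)
    (k : ℕ) (θ : Fin ℓ → ℝ) : (Fin m' → ℝ) →L[ℝ] (Fin m → ℝ) :=
  ((invProd Ainv ω k θ).comp (η (θ + (k : ℝ) • ω))).comp (bProd B ω k θ)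

/-- If `A : ℝ^ℓ → GL(m,ℝ)`, `B : ℝ^ℓ → M_{m'×m'}(ℝ)` and
`η : ℝ^ℓ → M_{m×m'}(ℝ)` are continuous and `ℤ^ℓ`-periodic with
`sup ‖A⁻¹‖ · sup ‖B‖ ≤ κ < 1`, then the series
`Δ(θ) = Σ_{k≥0} A(θ)⁻¹ ⋯ A(θ+kω)⁻¹ η(θ+kω) B(θ+(k−1)ω) ⋯ B(θ)`
converges absolutely and uniformly, defines a continuous `ℤ^ℓ`-periodic function,
solves `A(θ) Δ(θ) − Δ(θ+ω) B(θ) = η(θ)`, and is its unique bounded solution. -/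
theorem stmt13 (ℓ m m' : ℕ) (ω : Fin ℓ → ℝ)
    (A Ainv : (Fin ℓ → ℝ) → (Fin m → ℝ) →L[ℝ] (Fin m → ℝ))
    (B : (Fin ℓ → ℝ) → (Fin m' → ℝ) →L[ℝ] (Fin m' → ℝ))
    (η : (Fin ℓ → ℝ) → (Fin m' → ℝ) →L[ℝ] (Fin m → ℝ))
    (hAc : Continuous A) (hAinvc : Continuous Ainv) (hBc : Continuous B)
    (hηc : Continuous η)
    (hAinv₁ : ∀ θ, (A θ).comp (Ainv θ) = 1) (hAinv₂ : ∀ θ, (Ainv θ).comp (A θ) = 1)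
    (hAper : ∀ (θ : Fin ℓ → ℝ) (e : Fin ℓ → ℤ), A (θ + fun i => (e i : ℝ)) = A θ)
    (hBper : ∀ (θ : Fin ℓ → ℝ) (e : Fin ℓ → ℤ), B (θ + fun i => (e i : ℝ)) = B θ)
    (hηper : ∀ (θ : Fin ℓ → ℝ) (e : Fin ℓ → ℤ), η (θ + fun i => (e i : ℝ)) = η θ)
    (a b κ : ℝ) (hκ : κ < 1)
    (ha : ∀ θ, ‖Ainv θ‖ ≤ a) (hb : ∀ θ, ‖B θ‖ ≤ b) (hab : a * b ≤ κ) :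
    ∃ Δ : (Fin ℓ → ℝ) → (Fin m' → ℝ) →L[ℝ] (Fin m → ℝ),
      (∀ θ, Summable fun k : ℕ => ‖twistTerm Ainv B η ω k θ‖) ∧
      (∀ θ, HasSum (fun k : ℕ => twistTerm Ainv B η ω k θ) (Δ θ)) ∧
      TendstoUniformly
        (fun (N : ℕ) (θ : Fin ℓ → ℝ) => ∑ k ∈ Finset.range N, twistTerm Ainv B η ω k θ)
        Δ Filter.atTop ∧
      Continuous Δ ∧
      (∀ (θ : Fin ℓ → ℝ) (e : Fin ℓ → ℤ), Δ (θ + fun i => (e i : ℝ)) = Δ θ) ∧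
      (∀ θ, (A θ).comp (Δ θ) - (Δ (θ + ω)).comp (B θ) = η θ) ∧
      (∀ Δ' : (Fin ℓ → ℝ) → (Fin m' → ℝ) →L[ℝ] (Fin m → ℝ),
        (∃ c : ℝ, ∀ θ, ‖Δ' θ‖ ≤ c) →
        (∀ θ, (A θ).comp (Δ' θ) - (Δ' (θ + ω)).comp (B θ) = η θ) → Δ' = Δ) := by
  classical
  have ha0 : 0 ≤ a := le_trans (norm_nonneg _) (ha 0)
  have hb0 : 0 ≤ b := le_trans (norm_nonneg _) (hb 0)
  have hκ0 : 0 ≤ κ := le_trans (mul_nonneg ha0 hb0) hab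
  -- uniform bound on η
  obtain ⟨Cη, hCη⟩ : ∃ C, ∀ θ, ‖η θ‖ ≤ C := by
    obtain ⟨C, hC⟩ := (isCompact_Icc (a := (0 : Fin ℓ → ℝ)) (b := 1)).exists_bound_of_continuousOn
      hηc.continuousOn
    refine ⟨C, fun θ => ?_⟩
    have hmem : (fun i => Int.fract (θ i)) ∈ Set.Icc (0 : Fin ℓ → ℝ) 1 := by
      constructor <;> (rw [Pi.le_def]; intro i)
      · exact Int.fract_nonneg _
      · exact (Int.fract_lt_one _).le
    have hθ : η θ = η (fun i => Int.fract (θ i)) := by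
      have h := hηper (fun i => Int.fract (θ i)) (fun i => ⌊θ i⌋)
      rw [← h]
      congr 1
      funext i
      simp [Int.fract_add_floor]
    rw [hθ]; exact hC _ hmem
  have hCη0 : 0 ≤ Cη := le_trans (norm_nonneg _) (hCη 0)
  -- shift identity
  have key : ∀ (θ : Fin ℓ → ℝ) (k : ℕ), θ + ω + (k : ℝ) • ω = θ + (((k+1 : ℕ) : ℝ)) • ω := by
    intro θ k
    push_cast
    rw [add_smul, one_smul]
    abel
  -- norm bounds on products
  have hinv : ∀ (k : ℕ) (θ : Fin ℓ → ℝ), ‖invProd Ainv ω k θ‖ ≤ a ^ (k+1) := by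
    intro k
    induction k with
    | zero => intro θ; simpa [invProd] using ha θ
    | succ k ih =>
      intro θ
      calc ‖invProd Ainv ω (k+1) θ‖ ≤ ‖Ainv θ‖ * ‖invProd Ainv ω k (θ+ω)‖ :=
            ContinuousLinearMap.opNorm_comp_le _ _
        _ ≤ a * a ^ (k+1) := mul_le_mul (ha θ) (ih _) (norm_nonneg _) ha0
        _ = a ^ (k+1+1) := by ring
  have hbp : ∀ (k : ℕ) (θ : Fin ℓ → ℝ), ‖bProd B ω k θ‖ ≤ b ^ k := by
    intro k
    induction k with
    | zero =>
      intro θ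
      simpa [bProd, ContinuousLinearMap.one_def] using ContinuousLinearMap.norm_id_le
    | succ k ih =>
      intro θ
      calc ‖bProd B ω (k+1) θ‖ ≤ ‖B (θ + (k : ℝ) • ω)‖ * ‖bProd B ω k θ‖ :=
            ContinuousLinearMap.opNorm_comp_le _ _
        _ ≤ b * b ^ k := mul_le_mul (hb _) (ih _) (norm_nonneg _) hb0
        _ = b ^ (k+1) := by ring
  -- term bound
  have hterm : ∀ (k : ℕ) (θ : Fin ℓ → ℝ), ‖twistTerm Ainv B η ω k θ‖ ≤ (a * Cη) * κ ^ k := by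
    intro k θ
    have h1 : ‖twistTerm Ainv B η ω k θ‖ ≤ a ^ (k+1) * Cη * b ^ k := by
      calc ‖twistTerm Ainv B η ω k θ‖
          ≤ ‖(invProd Ainv ω k θ).comp (η (θ + (k : ℝ) • ω))‖ * ‖bProd B ω k θ‖ :=
            ContinuousLinearMap.opNorm_comp_le _ _
        _ ≤ ‖invProd Ainv ω k θ‖ * ‖η (θ + (k : ℝ) • ω)‖ * ‖bProd B ω k θ‖ :=
            mul_le_mul_of_nonneg_right (ContinuousLinearMap.opNorm_comp_le _ _) (norm_nonneg _)
        _ ≤ a ^ (k+1) * Cη * b ^ k := by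
            have h2 : ‖invProd Ainv ω k θ‖ * ‖η (θ + (k : ℝ) • ω)‖ ≤ a ^ (k+1) * Cη :=
              mul_le_mul (hinv k θ) (hCη _) (norm_nonneg _) (pow_nonneg ha0 _)
            exact mul_le_mul h2 (hbp k θ) (norm_nonneg _)
              (mul_nonneg (pow_nonneg ha0 _) hCη0)
    have h2 : a ^ (k+1) * Cη * b ^ k = (a * Cη) * (a*b) ^ k := by
      rw [mul_pow]; ring
    have h3 : (a*b) ^ k ≤ κ ^ k := pow_le_pow_left₀ (mul_nonneg ha0 hb0) hab k
    calc ‖twistTerm Ainv B η ω k θ‖ ≤ a ^ (k+1) * Cη * b ^ k := h1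
      _ = (a * Cη) * (a*b) ^ k := h2
      _ ≤ (a * Cη) * κ ^ k :=
          mul_le_mul_of_nonneg_left h3 (mul_nonneg ha0 hCη0)
  have hu : Summable (fun k : ℕ => (a * Cη) * κ ^ k) :=
    (summable_geometric_of_lt_one hκ0 hκ).mul_left _
  have hsummable : ∀ θ, Summable fun k : ℕ => ‖twistTerm Ainv B η ω k θ‖ := fun θ =>
    Summable.of_nonneg_of_le (fun k => norm_nonneg _) (fun k => hterm k θ) hu
  set Δ : (Fin ℓ → ℝ) → (Fin m' → ℝ) →L[ℝ] (Fin m → ℝ) :=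
    fun θ => ∑' k : ℕ, twistTerm Ainv B η ω k θ with hΔdef
  have hHasSum : ∀ θ, HasSum (fun k : ℕ => twistTerm Ainv B η ω k θ) (Δ θ) := fun θ =>
    ((hsummable θ).of_norm).hasSum
  have hUnif : TendstoUniformly
      (fun (N : ℕ) (θ : Fin ℓ → ℝ) => ∑ k ∈ Finset.range N, twistTerm Ainv B η ω k θ)
      Δ Filter.atTop :=
    tendstoUniformly_tsum_nat hu (fun k θ => hterm k θ)
  -- continuity
  have hinvc : ∀ k : ℕ, Continuous (fun θ => invProd Ainv ω k θ) := by
    intro k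
    induction k with
    | zero => exact hAinvc
    | succ k ih =>
      show Continuous fun θ => (Ainv θ).comp (invProd Ainv ω k (θ + ω))
      exact hAinvc.clm_comp (ih.comp (continuous_id.add continuous_const))
  have hbpc : ∀ k : ℕ, Continuous (fun θ => bProd B ω k θ) := by
    intro k
    induction k with
    | zero => exact continuous_const
    | succ k ih =>
      show Continuous fun θ => (B (θ + (k : ℝ) • ω)).comp (bProd B ω k θ)
      exact (hBc.comp (continuous_id.add continuous_const)).clm_comp ih
  have htermc : ∀ k : ℕ, Continuous fun θ => twistTerm Ainv B η ω k θ := by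
    intro k
    exact ((hinvc k).clm_comp (hηc.comp (continuous_id.add continuous_const))).clm_comp (hbpc k)
  have hΔc : Continuous Δ :=
    hUnif.continuous (Filter.Eventually.of_forall fun N =>
      continuous_finset_sum _ fun k _ => htermc k).frequently
  -- periodicity
  have hAinvper : ∀ (θ : Fin ℓ → ℝ) (e : Fin ℓ → ℤ),
      Ainv (θ + fun i => (e i : ℝ)) = Ainv θ := by
    intro θ e
    set θ' := θ + fun i => ((e i : ℤ) : ℝ) with hθ'
    calc Ainv θ' = (Ainv θ').comp ((A θ).comp (Ainv θ)) := by
          rw [hAinv₁ θ]; simp [ContinuousLinearMap.one_def]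
      _ = ((Ainv θ').comp (A θ')).comp (Ainv θ) := by
          rw [hAper θ e, ← ContinuousLinearMap.comp_assoc]
      _ = Ainv θ := by rw [hAinv₂ θ']; simp [ContinuousLinearMap.one_def]
  have hcomm : ∀ (θ : Fin ℓ → ℝ) (e : Fin ℓ → ℤ) (v : Fin ℓ → ℝ),
      (θ + fun i => ((e i : ℤ) : ℝ)) + v = (θ + v) + fun i => ((e i : ℤ) : ℝ) := by
    intro θ e v; abel
  have hinvper : ∀ (k : ℕ) (θ : Fin ℓ → ℝ) (e : Fin ℓ → ℤ),
      invProd Ainv ω k (θ + fun i => (e i : ℝ)) = invProd Ainv ω k θ := by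
    intro k
    induction k with
    | zero => intro θ e; exact hAinvper θ e
    | succ k ih =>
      intro θ e
      show (Ainv (θ + fun i => ((e i : ℤ) : ℝ))).comp
          (invProd Ainv ω k ((θ + fun i => ((e i : ℤ) : ℝ)) + ω)) = _
      rw [hAinvper θ e, hcomm θ e ω, ih (θ + ω) e]
      rfl
  have hbper : ∀ (k : ℕ) (θ : Fin ℓ → ℝ) (e : Fin ℓ → ℤ),
      bProd B ω k (θ + fun i => (e i : ℝ)) = bProd B ω k θ := by
    intro k
    induction k with
    | zero => intro θ e; rfl
    | succ k ih =>
      intro θ e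
      show (B ((θ + fun i => ((e i : ℤ) : ℝ)) + (k : ℝ) • ω)).comp
          (bProd B ω k (θ + fun i => ((e i : ℤ) : ℝ))) = _
      rw [hcomm θ e ((k : ℝ) • ω), hBper _ e, ih θ e]
      rfl
  have htermper : ∀ (k : ℕ) (θ : Fin ℓ → ℝ) (e : Fin ℓ → ℤ),
      twistTerm Ainv B η ω k (θ + fun i => (e i : ℝ)) = twistTerm Ainv B η ω k θ := by
    intro k θ e
    unfold twistTerm
    rw [hinvper k θ e, hbper k θ e, hcomm θ e ((k : ℝ) • ω), hηper _ e]
  have hΔper : ∀ (θ : Fin ℓ → ℝ) (e : Fin ℓ → ℤ), Δ (θ + fun i => (e i : ℝ)) = Δ θ := by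
    intro θ e
    exact tsum_congr fun k => htermper k θ e
  -- pointwise inverse
  have hptA : ∀ (θ : Fin ℓ → ℝ) (v : Fin m → ℝ), A θ (Ainv θ v) = v := by
    intro θ v
    have h := DFunLike.congr_fun (hAinv₁ θ) v
    simpa [ContinuousLinearMap.one_def] using h
  -- b-product shift
  have hbshift : ∀ (k : ℕ) (θ : Fin ℓ → ℝ),
      (bProd B ω k (θ + ω)).comp (B θ) = bProd B ω (k+1) θ := by
    intro k
    induction k with
    | zero =>
      intro θ
      show (1 : (Fin m' → ℝ) →L[ℝ] (Fin m' → ℝ)).comp (B θ) =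
        (B (θ + ((0:ℕ) : ℝ) • ω)).comp (1 : (Fin m' → ℝ) →L[ℝ] (Fin m' → ℝ))
      simp [ContinuousLinearMap.one_def]
    | succ k ih =>
      intro θ
      show ((B (θ + ω + (k : ℝ) • ω)).comp (bProd B ω k (θ + ω))).comp (B θ) =
        (B (θ + ((k+1 : ℕ) : ℝ) • ω)).comp (bProd B ω (k+1) θ)
      rw [ContinuousLinearMap.comp_assoc, ih θ, key θ k]
  -- head identities
  have hAhead0 : ∀ θ : Fin ℓ → ℝ, (A θ).comp (twistTerm Ainv B η ω 0 θ) = η θ := by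
    intro θ
    ext x
    simp [twistTerm, invProd, bProd, ContinuousLinearMap.one_def, hptA]
  have hAhead : ∀ (θ : Fin ℓ → ℝ) (k : ℕ),
      (A θ).comp (twistTerm Ainv B η ω (k+1) θ) =
        (twistTerm Ainv B η ω k (θ + ω)).comp (B θ) := by
    intro θ k
    ext x
    have hbs := DFunLike.congr_fun (hbshift k θ) x
    simp only [ContinuousLinearMap.comp_apply] at hbs
    simp only [twistTerm, invProd, ContinuousLinearMap.comp_apply, key θ k]
    rw [hptA, ← hbs]
  -- the equation
  have heq : ∀ θ, (A θ).comp (Δ θ) - (Δ (θ + ω)).comp (B θ) = η θ := by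
    intro θ
    have φL := ContinuousLinearMap.compL ℝ (Fin m' → ℝ) (Fin m → ℝ) (Fin m → ℝ) (A θ)
    have h1 : HasSum (fun k : ℕ => (A θ).comp (twistTerm Ainv B η ω k θ))
        ((A θ).comp (Δ θ)) := by
      have := (ContinuousLinearMap.compL ℝ (Fin m' → ℝ) (Fin m → ℝ) (Fin m → ℝ)
        (A θ)).hasSum (hHasSum θ)
      simpa using this
    have h2 : HasSum (fun k : ℕ => (twistTerm Ainv B η ω k (θ + ω)).comp (B θ))
        ((Δ (θ + ω)).comp (B θ)) := by
      have := ((ContinuousLinearMap.compL ℝ (Fin m' → ℝ) (Fin m' → ℝ)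
        (Fin m → ℝ)).flip (B θ)).hasSum (hHasSum (θ + ω))
      simpa using this
    have hfe : (fun k : ℕ => (A θ).comp (twistTerm Ainv B η ω (k+1) θ)) =
        (fun k : ℕ => (twistTerm Ainv B η ω k (θ + ω)).comp (B θ)) :=
      funext fun k => hAhead θ k
    have h2' : HasSum (fun k : ℕ => (A θ).comp (twistTerm Ainv B η ω (k+1) θ))
        ((Δ (θ + ω)).comp (B θ)) := by rw [hfe]; exact h2
    have h3 := (hasSum_nat_add_iff
      (f := fun k : ℕ => (A θ).comp (twistTerm Ainv B η ω k θ)) 1).mp h2'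
    have h4 : (A θ).comp (Δ θ) = (Δ (θ + ω)).comp (B θ) + η θ := by
      have h5 := h1.unique h3
      rw [h5, Finset.sum_range_one, hAhead0 θ]
    rw [h4]; abel
  -- bound on Δ
  have hΔbound : ∀ θ, ‖Δ θ‖ ≤ (a * Cη) * (1 - κ)⁻¹ := by
    intro θ
    calc ‖Δ θ‖ ≤ ∑' k : ℕ, ‖twistTerm Ainv B η ω k θ‖ :=
          norm_tsum_le_tsum_norm (hsummable θ)
      _ ≤ ∑' k : ℕ, (a * Cη) * κ ^ k := Summable.tsum_le_tsum (fun k => hterm k θ) (hsummable θ) hu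
      _ = (a * Cη) * (1 - κ)⁻¹ := by
          rw [tsum_mul_left, tsum_geometric_of_lt_one hκ0 hκ]
  refine ⟨Δ, hsummable, hHasSum, hUnif, hΔc, hΔper, heq, ?_⟩
  -- uniqueness
  rintro Δ' ⟨c, hc⟩ heq'
  set M := c + (a * Cη) * (1 - κ)⁻¹ with hM
  have hDbound : ∀ θ, ‖Δ' θ - Δ θ‖ ≤ M := fun θ =>
    (norm_sub_le _ _).trans (add_le_add (hc θ) (hΔbound θ))
  have hM0 : 0 ≤ M := le_trans (norm_nonneg _) (hDbound 0)
  have hstep : ∀ θ, Δ' θ - Δ θ = (Ainv θ).comp ((Δ' (θ + ω) - Δ (θ + ω)).comp (B θ)) := by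
    intro θ
    have h4 : (A θ).comp (Δ' θ) - (Δ' (θ + ω)).comp (B θ) =
        (A θ).comp (Δ θ) - (Δ (θ + ω)).comp (B θ) := by rw [heq' θ, heq θ]
    have h1 : (A θ).comp (Δ' θ - Δ θ) = (Δ' (θ + ω) - Δ (θ + ω)).comp (B θ) := by
      rw [ContinuousLinearMap.comp_sub, ContinuousLinearMap.sub_comp]
      exact sub_eq_sub_iff_sub_eq_sub.mp h4
    calc Δ' θ - Δ θ = (Ainv θ).comp ((A θ).comp (Δ' θ - Δ θ)) := by
          rw [← ContinuousLinearMap.comp_assoc, hAinv₂ θ]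
          simp [ContinuousLinearMap.one_def]
      _ = (Ainv θ).comp ((Δ' (θ + ω) - Δ (θ + ω)).comp (B θ)) := by rw [h1]
  have hiter : ∀ (n : ℕ) (θ : Fin ℓ → ℝ), ‖Δ' θ - Δ θ‖ ≤ κ ^ n * M := by
    intro n
    induction n with
    | zero => intro θ; simpa using hDbound θ
    | succ n ih =>
      intro θ
      rw [hstep θ]
      have hB1 : ‖(Δ' (θ + ω) - Δ (θ + ω)).comp (B θ)‖ ≤ (κ ^ n * M) * b := by
        calc ‖(Δ' (θ + ω) - Δ (θ + ω)).comp (B θ)‖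
            ≤ ‖Δ' (θ + ω) - Δ (θ + ω)‖ * ‖B θ‖ := ContinuousLinearMap.opNorm_comp_le _ _
          _ ≤ (κ ^ n * M) * b :=
            mul_le_mul (ih _) (hb θ) (norm_nonneg _) (mul_nonneg (pow_nonneg hκ0 _) hM0)
      calc ‖(Ainv θ).comp ((Δ' (θ + ω) - Δ (θ + ω)).comp (B θ))‖
          ≤ ‖Ainv θ‖ * ‖(Δ' (θ + ω) - Δ (θ + ω)).comp (B θ)‖ :=
            ContinuousLinearMap.opNorm_comp_le _ _
        _ ≤ a * ((κ ^ n * M) * b) :=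
            mul_le_mul (ha θ) hB1 (norm_nonneg _) ha0
        _ = (a * b) * (κ ^ n * M) := by ring
        _ ≤ κ * (κ ^ n * M) :=
            mul_le_mul_of_nonneg_right hab (mul_nonneg (pow_nonneg hκ0 _) hM0)
        _ = κ ^ (n+1) * M := by ring
  funext θ
  have hlim : Filter.Tendsto (fun n : ℕ => κ ^ n * M) Filter.atTop (nhds 0) := by
    simpa using (tendsto_pow_atTop_nhds_zero_of_lt_one hκ0 hκ).mul_const M
  have h0 : ‖Δ' θ - Δ θ‖ ≤ 0 := ge_of_tendsto' hlim (fun n => hiter n θ)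
  exact sub_eq_zero.mp (norm_le_zero_iff.mp h0)
end

section
/- (Superexponential convergence of the doubling scheme.) In the setting where A: ℝ^ℓ → GL(m,ℝ), B: ℝ^ℓ → M_{m'×m'}(ℝ), η: ℝ^ℓ → M_{m×m'}(ℝ) are continuous, ℤ^ℓ-periodic, with a := sup_θ ‖A(θ)^{−1}‖ and b := sup_θ ‖B(θ)‖ satisfying ab ≤ κ < 1, define recursively α_0(θ) = A(θ)^{−1}, β_0(θ) = B(θ), h_0(θ) = A(θ)^{−1} η(θ), and for n ≥ 0: α_{n+1}(θ) = α_n(θ) α_n(θ + 2^n ω), β_{n+1}(θ) = β_n(θ + 2^n ω) β_n(θ), h_{n+1}(θ) = h_n(θ) + α_n(θ) h_n(θ + 2^n ω) β_n(θ). Then h_n converges uniformly to the unique bounded solution Δ of A(θ)Δ(θ) − Δ(θ+ω)B(θ) = η(θ), and sup_θ ‖Δ(θ) − h_n(θ)‖ ≤ a · (sup_θ ‖η(θ)‖) · κ^{2^n} / (1 − κ) for every n ≥ 0. -/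
open Filter Finset

private def gseq {ℓ m m' : ℕ} (ω : Fin ℓ → ℝ)
    (Ainv : (Fin ℓ → ℝ) → (Fin m → ℝ) →L[ℝ] (Fin m → ℝ))
    (B : (Fin ℓ → ℝ) → (Fin m' → ℝ) →L[ℝ] (Fin m' → ℝ))
    (η : (Fin ℓ → ℝ) → (Fin m' → ℝ) →L[ℝ] (Fin m → ℝ)) :
    ℕ → (Fin ℓ → ℝ) → (Fin m' → ℝ) →L[ℝ] (Fin m → ℝ)
  | 0, θ => (Ainv θ).comp (η θ)
  | (k+1), θ => ((Ainv θ).comp (gseq ω Ainv B η k (θ + ω))).comp (B θ)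

private lemma comp_sum_comp {m m' p q : ℕ} (f : (Fin p → ℝ) →L[ℝ] (Fin m → ℝ))
    (s : Finset ℕ) (g : ℕ → (Fin q → ℝ) →L[ℝ] (Fin p → ℝ))
    (h : (Fin m' → ℝ) →L[ℝ] (Fin q → ℝ)) :
    (f.comp (∑ i ∈ s, g i)).comp h = ∑ i ∈ s, (f.comp (g i)).comp h := by
  ext x
  simp [ContinuousLinearMap.sum_apply, map_sum]

/-- **Superexponential convergence of the doubling scheme.**
With `a := sup ‖A⁻¹‖`, `b := sup ‖B‖`, `ab ≤ κ < 1` and `e := sup ‖η‖`, define the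
doubling iterates `α₀ = A⁻¹`, `β₀ = B`, `h₀ = A⁻¹ η`,
`α_{n+1}(θ) = α_n(θ) α_n(θ+2ⁿω)`, `β_{n+1}(θ) = β_n(θ+2ⁿω) β_n(θ)`,
`h_{n+1}(θ) = h_n(θ) + α_n(θ) h_n(θ+2ⁿω) β_n(θ)`.  Then `h_n` converges uniformly to
the unique bounded solution `Δ` of `A(θ)Δ(θ) − Δ(θ+ω)B(θ) = η(θ)`, with
`sup_θ ‖Δ(θ) − h_n(θ)‖ ≤ a e κ^{2ⁿ}/(1−κ)` for every `n`. -/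
theorem stmt14 (ℓ m m' : ℕ) (ω : Fin ℓ → ℝ)
    (A Ainv : (Fin ℓ → ℝ) → (Fin m → ℝ) →L[ℝ] (Fin m → ℝ))
    (B : (Fin ℓ → ℝ) → (Fin m' → ℝ) →L[ℝ] (Fin m' → ℝ))
    (η : (Fin ℓ → ℝ) → (Fin m' → ℝ) →L[ℝ] (Fin m → ℝ))
    (hAc : Continuous A) (hAinvc : Continuous Ainv) (hBc : Continuous B)
    (hηc : Continuous η)
    (hAinv₁ : ∀ θ, (A θ).comp (Ainv θ) = 1) (hAinv₂ : ∀ θ, (Ainv θ).comp (A θ) = 1)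
    (hAper : ∀ (θ : Fin ℓ → ℝ) (e : Fin ℓ → ℤ), A (θ + fun i => (e i : ℝ)) = A θ)
    (hBper : ∀ (θ : Fin ℓ → ℝ) (e : Fin ℓ → ℤ), B (θ + fun i => (e i : ℝ)) = B θ)
    (hηper : ∀ (θ : Fin ℓ → ℝ) (e : Fin ℓ → ℤ), η (θ + fun i => (e i : ℝ)) = η θ)
    (a b κ e : ℝ) (hκ : κ < 1) (hab : a * b ≤ κ)
    (ha : ∀ θ, ‖Ainv θ‖ ≤ a) (hb : ∀ θ, ‖B θ‖ ≤ b) (he : ∀ θ, ‖η θ‖ ≤ e)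
    (αs : ℕ → (Fin ℓ → ℝ) → (Fin m → ℝ) →L[ℝ] (Fin m → ℝ))
    (βs : ℕ → (Fin ℓ → ℝ) → (Fin m' → ℝ) →L[ℝ] (Fin m' → ℝ))
    (hs : ℕ → (Fin ℓ → ℝ) → (Fin m' → ℝ) →L[ℝ] (Fin m → ℝ))
    (hα0 : ∀ θ, αs 0 θ = Ainv θ)
    (hβ0 : ∀ θ, βs 0 θ = B θ)
    (hh0 : ∀ θ, hs 0 θ = (Ainv θ).comp (η θ))
    (hαrec : ∀ (n : ℕ) θ, αs (n + 1) θ = (αs n θ).comp (αs n (θ + (2 ^ n : ℝ) • ω)))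
    (hβrec : ∀ (n : ℕ) θ, βs (n + 1) θ = (βs n (θ + (2 ^ n : ℝ) • ω)).comp (βs n θ))
    (hhrec : ∀ (n : ℕ) θ, hs (n + 1) θ =
      hs n θ + ((αs n θ).comp (hs n (θ + (2 ^ n : ℝ) • ω))).comp (βs n θ)) :
    ∃ Δ : (Fin ℓ → ℝ) → (Fin m' → ℝ) →L[ℝ] (Fin m → ℝ),
      (∀ θ, (A θ).comp (Δ θ) - (Δ (θ + ω)).comp (B θ) = η θ) ∧
      (∃ c : ℝ, ∀ θ, ‖Δ θ‖ ≤ c) ∧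
      (∀ Δ' : (Fin ℓ → ℝ) → (Fin m' → ℝ) →L[ℝ] (Fin m → ℝ),
        (∃ c : ℝ, ∀ θ, ‖Δ' θ‖ ≤ c) →
        (∀ θ, (A θ).comp (Δ' θ) - (Δ' (θ + ω)).comp (B θ) = η θ) → Δ' = Δ) ∧
      TendstoUniformly hs Δ Filter.atTop ∧
      (∀ (n : ℕ) (θ : Fin ℓ → ℝ), ‖Δ θ - hs n θ‖ ≤ a * e * κ ^ (2 ^ n) / (1 - κ)) := by
  -- basic positivity facts
  have ha0 : 0 ≤ a := le_trans (norm_nonneg _) (ha 0)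
  have hb0 : 0 ≤ b := le_trans (norm_nonneg _) (hb 0)
  have he0 : 0 ≤ e := le_trans (norm_nonneg _) (he 0)
  have hκ0 : 0 ≤ κ := le_trans (mul_nonneg ha0 hb0) hab
  have h1κ : 0 < 1 - κ := by linarith
  set g := gseq ω Ainv B η with hgdef
  -- norm bound on the general term
  have hgnorm : ∀ (k : ℕ) (θ : Fin ℓ → ℝ), ‖g k θ‖ ≤ a * e * κ ^ k := by
    intro k
    induction k with
    | zero =>
      intro θ
      simp only [hgdef, gseq, pow_zero, mul_one]
      calc ‖(Ainv θ).comp (η θ)‖ ≤ ‖Ainv θ‖ * ‖η θ‖ := ContinuousLinearMap.opNorm_comp_le _ _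
        _ ≤ a * e := by
          apply mul_le_mul (ha θ) (he θ) (norm_nonneg _) ha0
    | succ k ih =>
      intro θ
      have h1 : ‖g (k+1) θ‖ ≤ ‖Ainv θ‖ * ‖g k (θ + ω)‖ * ‖B θ‖ := by
        simp only [hgdef, gseq]
        calc ‖(((Ainv θ).comp (gseq ω Ainv B η k (θ + ω)))).comp (B θ)‖
            ≤ ‖(Ainv θ).comp (gseq ω Ainv B η k (θ + ω))‖ * ‖B θ‖ :=
              ContinuousLinearMap.opNorm_comp_le _ _
          _ ≤ ‖Ainv θ‖ * ‖gseq ω Ainv B η k (θ + ω)‖ * ‖B θ‖ := by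
              apply mul_le_mul_of_nonneg_right (ContinuousLinearMap.opNorm_comp_le _ _)
                (norm_nonneg _)
      have h2 := ih (θ + ω)
      have h3 : ‖Ainv θ‖ * ‖g k (θ + ω)‖ * ‖B θ‖ ≤ a * (a * e * κ ^ k) * b := by
        have := ha θ; have := hb θ
        exact mul_le_mul (mul_le_mul (ha θ) h2 (norm_nonneg _) ha0) (hb θ) (norm_nonneg _)
          (mul_nonneg ha0 (mul_nonneg (mul_nonneg ha0 he0) (pow_nonneg hκ0 k)))
      have h4 : a * (a * e * κ ^ k) * b ≤ a * e * κ ^ (k+1) := by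
        have hpow : (0:ℝ) ≤ κ ^ k := pow_nonneg hκ0 k
        have : a * (a * e * κ ^ k) * b = (a * b) * (a * e * κ ^ k) := by ring
        rw [this, pow_succ]
        have h5 : (a*b) * (a * e * κ ^ k) ≤ κ * (a * e * κ ^ k) :=
          mul_le_mul_of_nonneg_right hab (by positivity)
        calc (a*b) * (a * e * κ ^ k) ≤ κ * (a * e * κ ^ k) := h5
          _ = a * e * (κ ^ k * κ) := by ring
      linarith
  -- summability
  have hsum : ∀ θ, Summable (fun k => g k θ) := by
    intro θ
    apply Summable.of_norm_bounded ((summable_geometric_of_lt_one hκ0 hκ).mul_left (a*e))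
    exact fun k => hgnorm k θ
  set Δ : (Fin ℓ → ℝ) → (Fin m' → ℝ) →L[ℝ] (Fin m → ℝ) := fun θ => ∑' k, g k θ with hΔdef
  -- the shift identity for αs, βs acting on g
  have hshift : ∀ (n : ℕ) (θ : Fin ℓ → ℝ),
      θ + (2 ^ (n+1) : ℝ) • ω = (θ + (2 ^ n : ℝ) • ω) + (2 ^ n : ℝ) • ω := by
    intro n θ
    have : (2 ^ (n+1) : ℝ) = (2 ^ n : ℝ) + 2 ^ n := by ring
    rw [this, add_smul, add_assoc]
  have hcomp : ∀ (n k : ℕ) (θ : Fin ℓ → ℝ),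
      ((αs n θ).comp (g k (θ + (2 ^ n : ℝ) • ω))).comp (βs n θ) = g (2 ^ n + k) θ := by
    intro n
    induction n with
    | zero =>
      intro k θ
      have : (2:ℝ) ^ (0:ℕ) • ω = ω := by norm_num
      rw [hα0, hβ0, this]
      show ((Ainv θ).comp (g k (θ + ω))).comp (B θ) = g (2^0 + k) θ
      have : 2^0 + k = k + 1 := by omega
      rw [this]
      rfl
    | succ n ih =>
      intro k θ
      rw [hαrec, hβrec, hshift]
      have : ((((αs n θ).comp (αs n (θ + (2 ^ n : ℝ) • ω)))).comp
          (g k ((θ + (2 ^ n : ℝ) • ω) + (2 ^ n : ℝ) • ω))).comp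
          ((βs n (θ + (2 ^ n : ℝ) • ω)).comp (βs n θ))
          = ((αs n θ).comp (((αs n (θ + (2 ^ n : ℝ) • ω)).comp
              (g k ((θ + (2 ^ n : ℝ) • ω) + (2 ^ n : ℝ) • ω))).comp
              (βs n (θ + (2 ^ n : ℝ) • ω)))).comp (βs n θ) := by
        simp only [ContinuousLinearMap.comp_assoc]
      rw [this, ih k (θ + (2 ^ n : ℝ) • ω), ih (2^n + k) θ]
      congr 1
      omega
  -- partial sums
  have hpartial : ∀ (n : ℕ) (θ : Fin ℓ → ℝ), hs n θ = ∑ k ∈ range (2^n), g k θ := by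
    intro n
    induction n with
    | zero =>
      intro θ
      simp [hh0 θ]
      rfl
    | succ n ih =>
      intro θ
      rw [hhrec, ih θ, ih (θ + (2 ^ n : ℝ) • ω), comp_sum_comp]
      have hsplit : (2:ℕ)^(n+1) = 2^n + 2^n := by omega
      rw [hsplit, Finset.sum_range_add]
      congr 1
      apply Finset.sum_congr rfl
      intro k _
      exact hcomp n k θ
  -- tail bound
  have htail : ∀ (n : ℕ) (θ : Fin ℓ → ℝ), ‖Δ θ - hs n θ‖ ≤ a * e * κ ^ (2 ^ n) / (1 - κ) := by
    intro n θ
    have h1 := Summable.sum_add_tsum_nat_add (f := fun k => g k θ) (2^n) (hsum θ)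
    have h2 : Δ θ - hs n θ = ∑' k, g (k + 2^n) θ := by
      rw [hpartial n θ]
      show (∑' k, g k θ) - _ = _
      rw [← h1]
      abel
    rw [h2]
    have hsum2 : Summable (fun k => ‖g (k + 2^n) θ‖) := by
      apply Summable.of_nonneg_of_le (fun k => norm_nonneg _)
        (fun k => hgnorm (k + 2^n) θ)
      have : Summable (fun k : ℕ => a * e * κ ^ (k + 2^n)) := by
        simp_rw [pow_add]
        exact ((summable_geometric_of_lt_one hκ0 hκ).mul_right (κ ^ (2^n))).mul_left (a*e)
      exact this
    calc ‖∑' k, g (k + 2^n) θ‖ ≤ ∑' k, ‖g (k + 2^n) θ‖ := norm_tsum_le_tsum_norm hsum2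
      _ ≤ ∑' k : ℕ, a * e * κ ^ (k + 2^n) := by
          apply Summable.tsum_le_tsum (fun k => hgnorm (k + 2^n) θ) hsum2
          simp_rw [pow_add]
          exact ((summable_geometric_of_lt_one hκ0 hκ).mul_right (κ ^ (2^n))).mul_left (a*e)
      _ = a * e * κ ^ (2^n) / (1 - κ) := by
          simp_rw [pow_add]
          rw [tsum_mul_left, tsum_mul_right, tsum_geometric_of_lt_one hκ0 hκ]
          field_simp
  -- Δ is bounded
  have hΔbdd : ∀ θ, ‖Δ θ‖ ≤ a * e / (1 - κ) := by
    intro θ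
    have h0 := htail 0 θ
    have h1 := hgnorm 0 θ
    have : Δ θ = (Δ θ - hs 0 θ) + hs 0 θ := by abel
    rw [this]
    have hh0' : hs 0 θ = g 0 θ := by rw [hh0]; rfl
    calc ‖(Δ θ - hs 0 θ) + hs 0 θ‖ ≤ ‖Δ θ - hs 0 θ‖ + ‖hs 0 θ‖ := norm_add_le _ _
      _ ≤ a * e * κ ^ (2^0) / (1 - κ) + a * e := by
          have h1' : ‖hs 0 θ‖ ≤ a * e := by rw [hh0']; simpa using h1
          exact add_le_add h0 h1'
      _ ≤ a * e / (1 - κ) := by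
          have hpow : κ ^ (2^0 : ℕ) = κ := by norm_num
          rw [hpow]
          have hEq : a * e * κ / (1 - κ) + a * e = a * e / (1 - κ) := by
            field_simp
            ring
          exact le_of_eq hEq
  -- the functional equation
  have heq : ∀ θ, (A θ).comp (Δ θ) - (Δ (θ + ω)).comp (B θ) = η θ := by
    intro θ
    set L : ((Fin m' → ℝ) →L[ℝ] (Fin m → ℝ)) →L[ℝ] ((Fin m' → ℝ) →L[ℝ] (Fin m → ℝ)) :=
      ContinuousLinearMap.compL ℝ (Fin m' → ℝ) (Fin m → ℝ) (Fin m → ℝ) (A θ) with hLdef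
    set R : ((Fin m' → ℝ) →L[ℝ] (Fin m → ℝ)) →L[ℝ] ((Fin m' → ℝ) →L[ℝ] (Fin m → ℝ)) :=
      (ContinuousLinearMap.compL ℝ (Fin m' → ℝ) (Fin m' → ℝ) (Fin m → ℝ)).flip (B θ) with hRdef
    have hL : ∀ x, L x = (A θ).comp x := fun x => rfl
    have hR : ∀ x, R x = x.comp (B θ) := fun x => rfl
    have e1 : (A θ).comp (Δ θ) = ∑' k, (A θ).comp (g k θ) := by
      rw [← hL]
      show L (∑' k, g k θ) = _
      rw [L.map_tsum (hsum θ)]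
      exact tsum_congr fun k => hL _
    have e2 : ∀ k, (A θ).comp (g (k+1) θ) = (g k (θ + ω)).comp (B θ) := by
      intro k
      show (A θ).comp (((Ainv θ).comp (g k (θ + ω))).comp (B θ)) = _
      rw [← ContinuousLinearMap.comp_assoc, ← ContinuousLinearMap.comp_assoc,
        hAinv₁ θ, ContinuousLinearMap.one_def, ContinuousLinearMap.id_comp]
    have e0 : (A θ).comp (g 0 θ) = η θ := by
      show (A θ).comp ((Ainv θ).comp (η θ)) = η θ
      rw [← ContinuousLinearMap.comp_assoc, hAinv₁ θ, ContinuousLinearMap.one_def,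
        ContinuousLinearMap.id_comp]
    have hsumA : Summable (fun k => (A θ).comp (g k θ)) := by
      have := (hsum θ).map L.toLinearMap.toAddMonoidHom L.continuous
      exact this
    have e3 : (∑' k, (A θ).comp (g k θ)) = η θ + ∑' k, (A θ).comp (g (k+1) θ) := by
      rw [Summable.tsum_eq_zero_add hsumA, e0]
    have e4 : (∑' k, (A θ).comp (g (k+1) θ)) = (Δ (θ + ω)).comp (B θ) := by
      simp_rw [e2]
      rw [← hR]
      show _ = R (∑' k, g k (θ + ω))
      rw [R.map_tsum (hsum (θ + ω))]
      rfl
    rw [e1, e3, e4]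
    abel
  -- uniqueness
  have huniq : ∀ Δ' : (Fin ℓ → ℝ) → (Fin m' → ℝ) →L[ℝ] (Fin m → ℝ),
      (∃ c : ℝ, ∀ θ, ‖Δ' θ‖ ≤ c) →
      (∀ θ, (A θ).comp (Δ' θ) - (Δ' (θ + ω)).comp (B θ) = η θ) → Δ' = Δ := by
    intro Δ' ⟨c, hc⟩ heq'
    funext θ₀
    set D : (Fin ℓ → ℝ) → (Fin m' → ℝ) →L[ℝ] (Fin m → ℝ) := fun θ => Δ' θ - Δ θ with hDdef
    have hD : ∀ θ, D θ = (Ainv θ).comp ((D (θ + ω)).comp (B θ)) := by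
      intro θ
      have h1 : (A θ).comp (D θ) = (D (θ + ω)).comp (B θ) := by
        have := heq' θ
        have h2 := heq θ
        simp only [hDdef]
        rw [ContinuousLinearMap.comp_sub, ContinuousLinearMap.sub_comp]
        rw [sub_eq_iff_eq_add] at this h2
        rw [this, h2]
        abel
      rw [← h1, ← ContinuousLinearMap.comp_assoc, hAinv₂ θ,
        ContinuousLinearMap.one_def, ContinuousLinearMap.id_comp]
    have hDbdd : ∀ θ, ‖D θ‖ ≤ c + a * e / (1 - κ) := by
      intro θ
      calc ‖D θ‖ ≤ ‖Δ' θ‖ + ‖Δ θ‖ := norm_sub_le _ _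
        _ ≤ c + a * e / (1 - κ) := add_le_add (hc θ) (hΔbdd θ)
    have hCnn : 0 ≤ c + a * e / (1 - κ) :=
      le_trans (norm_nonneg (D 0)) (hDbdd 0)
    have hiter : ∀ (k : ℕ) (θ : Fin ℓ → ℝ), ‖D θ‖ ≤ κ ^ k * (c + a * e / (1 - κ)) := by
      intro k
      induction k with
      | zero => intro θ; simpa using hDbdd θ
      | succ k ih =>
        intro θ
        rw [hD θ]
        calc ‖(Ainv θ).comp ((D (θ + ω)).comp (B θ))‖
            ≤ ‖Ainv θ‖ * (‖D (θ + ω)‖ * ‖B θ‖) := le_trans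
              (ContinuousLinearMap.opNorm_comp_le _ _)
              (mul_le_mul_of_nonneg_left (ContinuousLinearMap.opNorm_comp_le _ _)
                (norm_nonneg _))
          _ ≤ a * ((κ ^ k * (c + a * e / (1 - κ))) * b) := by
              apply mul_le_mul (ha θ) _ (mul_nonneg (norm_nonneg _) (norm_nonneg _)) ha0
              exact mul_le_mul (ih (θ + ω)) (hb θ) (norm_nonneg _)
                (mul_nonneg (pow_nonneg hκ0 k) hCnn)
          _ = (a * b) * (κ ^ k * (c + a * e / (1 - κ))) := by ring
          _ ≤ κ * (κ ^ k * (c + a * e / (1 - κ))) :=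
              mul_le_mul_of_nonneg_right hab (mul_nonneg (pow_nonneg hκ0 k) hCnn)
          _ = κ ^ (k+1) * (c + a * e / (1 - κ)) := by ring
    have hzero : ‖D θ₀‖ ≤ 0 := by
      have htend : Filter.Tendsto (fun k : ℕ => κ ^ k * (c + a * e / (1 - κ)))
          Filter.atTop (nhds 0) := by
        have ht := (tendsto_pow_atTop_nhds_zero_of_lt_one hκ0 hκ).mul_const
          (c + a * e / (1 - κ))
        rwa [zero_mul] at ht
      exact ge_of_tendsto' htend (fun k => hiter k θ₀)
    have : D θ₀ = 0 := by
      rw [← norm_le_zero_iff]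
      exact hzero
    have h9 : Δ' θ₀ - Δ θ₀ = 0 := this
    exact sub_eq_zero.mp h9
  -- uniform convergence
  have hM : Filter.Tendsto (fun n : ℕ => a * e * κ ^ (2^n) / (1 - κ))
      Filter.atTop (nhds 0) := by
    have h1 : Filter.Tendsto (fun j : ℕ => κ ^ j) Filter.atTop (nhds 0) :=
      tendsto_pow_atTop_nhds_zero_of_lt_one hκ0 hκ
    have h2 : Filter.Tendsto (fun n : ℕ => (2:ℕ)^n) Filter.atTop Filter.atTop :=
      tendsto_pow_atTop_atTop_of_one_lt (by norm_num)
    have h3 := h1.comp h2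
    have h4 := (h3.const_mul (a*e)).div_const (1-κ)
    simpa [Function.comp] using h4
  have hTU : TendstoUniformly hs Δ Filter.atTop := by
    rw [Metric.tendstoUniformly_iff]
    intro ε hε
    filter_upwards [hM.eventually_lt_const hε] with n hn θ
    rw [dist_eq_norm]
    exact lt_of_le_of_lt (htail n θ) hn
  exact ⟨Δ, heq, ⟨a*e/(1-κ), hΔbdd⟩, huniq, hTU, htail⟩
end

section
/- Let J be a constant antisymmetric 2d×2d real matrix, F: ℝ^{2d} → ℝ^{2d} C¹ with DF(x)^T J DF(x) = J for all x, ω ∈ ℝ^ℓ, and 0 < |μ| < 1. Let W: ℝ^ℓ × [−1,1] → ℝ^{2d} be C¹, ℤ^ℓ-periodic in the first variable, and satisfy the whisker invariance equation F(W(θ,s)) = W(θ+ω, μs) for all (θ,s) ∈ ℝ^ℓ × [−1,1]. Assume the torus is isotropic: D_θW(θ,0)^T J D_θW(θ,0) = 0 for all θ. Then for every (θ,s) ∈ ℝ^ℓ × [−1,1]: (i) D_θW(θ,s)^T J D_θW(θ,s) = 0, and (ii) D_θW(θ,s)^T J ∂_s W(θ,s) = 0. -/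
open Matrix

/-- The Jacobian matrix of a map `f : ℝ^n → ℝ^m` at `x`, with entries
`(∂f_i/∂x_j)(x)`. -/
noncomputable def jacobian {n m : ℕ} (f : (Fin n → ℝ) → Fin m → ℝ) (x : Fin n → ℝ) :
    Matrix (Fin m) (Fin n) ℝ :=
  fun i j => fderiv ℝ f x (Pi.single j 1) i

/-- The `2d×ℓ` matrix of partial derivatives in `θ` of a whisker
parameterization `W(θ,s)`. -/
noncomputable def DthetaW {ℓ D : ℕ} (W : (Fin ℓ → ℝ) → ℝ → Fin D → ℝ)
    (θ : Fin ℓ → ℝ) (s : ℝ) : Matrix (Fin D) (Fin ℓ) ℝ :=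
  fun i j => fderiv ℝ (fun θ' => W θ' s i) θ (Pi.single j 1)

/-- The partial derivative in `s` of a whisker parameterization `W(θ,s)`. -/
noncomputable def DsW {ℓ D : ℕ} (W : (Fin ℓ → ℝ) → ℝ → Fin D → ℝ)
    (θ : Fin ℓ → ℝ) (s : ℝ) : Fin D → ℝ :=
  fun i => deriv (fun s' => W θ s' i) s

set_option maxHeartbeats 1600000

lemma clm_fin_apply {n : ℕ} {E : Type*} [NormedAddCommGroup E] [NormedSpace ℝ E]
    (L : (Fin n → ℝ) →L[ℝ] E) (v : Fin n → ℝ) :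
    L v = ∑ k, v k • L (Pi.single k 1) := by
  have h : v = ∑ k, v k • (Pi.single k 1 : Fin n → ℝ) := by
    funext m
    simp [Finset.sum_apply, Pi.single_apply]
  nth_rewrite 1 [h]
  rw [map_sum]
  exact Finset.sum_congr rfl fun k _ => L.map_smul (v k) _

/-- Let `J` be a constant antisymmetric `2d×2d` matrix, `F` a `C¹`
symplectic map, `0 < |μ| < 1`, and let `W(θ,s)` be a `C¹`, `ℤ^ℓ`-periodic-in-`θ`
parameterization satisfying the whisker invariance equation
`F(W(θ,s)) = W(θ+ω, μs)` for `s ∈ [−1,1]`, whose base torus `s = 0` is isotropic.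
Then for all `(θ,s)` with `s ∈ [−1,1]`:
(i) `D_θW(θ,s)ᵀ J D_θW(θ,s) = 0`, and (ii) `D_θW(θ,s)ᵀ J ∂_sW(θ,s) = 0`. -/
theorem stmt17 (d ℓ : ℕ) (J : Matrix (Fin (2 * d)) (Fin (2 * d)) ℝ)
    (hJanti : Jᵀ = -J)
    (F : (Fin (2 * d) → ℝ) → Fin (2 * d) → ℝ) (hF : ContDiff ℝ 1 F)
    (hFsymp : ∀ x, (jacobian F x)ᵀ * J * jacobian F x = J)
    (ω : Fin ℓ → ℝ) (μ : ℝ) (hμ0 : 0 < |μ|) (hμ1 : |μ| < 1)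
    (W : (Fin ℓ → ℝ) → ℝ → Fin (2 * d) → ℝ)
    (hW : ContDiff ℝ 1 (fun p : (Fin ℓ → ℝ) × ℝ => W p.1 p.2))
    (hWper : ∀ (θ : Fin ℓ → ℝ) (e : Fin ℓ → ℤ) (s : ℝ),
      W (θ + fun i => (e i : ℝ)) s = W θ s)
    (hinv : ∀ (θ : Fin ℓ → ℝ), ∀ s ∈ Set.Icc (-1 : ℝ) 1,
      F (W θ s) = W (θ + ω) (μ * s))
    (hiso0 : ∀ θ, (DthetaW W θ 0)ᵀ * J * DthetaW W θ 0 = 0) :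
    ∀ (θ : Fin ℓ → ℝ), ∀ s ∈ Set.Icc (-1 : ℝ) 1,
      (DthetaW W θ s)ᵀ * J * DthetaW W θ s = 0 ∧
      ((DthetaW W θ s)ᵀ).mulVec (J.mulVec (DsW W θ s)) = 0 := by
  classical
  have hWd : Differentiable ℝ (fun p : (Fin ℓ → ℝ) × ℝ => W p.1 p.2) :=
    hW.differentiable one_ne_zero
  have hFd : Differentiable ℝ F := hF.differentiable one_ne_zero
  -- the θ-slice has a derivative coming from the full derivative
  have hslice : ∀ (θ : Fin ℓ → ℝ) (s : ℝ),
      HasFDerivAt (fun θ' => W θ' s)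
        ((fderiv ℝ (fun p : (Fin ℓ → ℝ) × ℝ => W p.1 p.2) (θ, s)).comp
          ((ContinuousLinearMap.id ℝ (Fin ℓ → ℝ)).prod 0)) θ := by
    intro θ s
    exact (hWd (θ, s)).hasFDerivAt.comp (f := fun x => (id x, s)) θ ((hasFDerivAt_id θ).prodMk (hasFDerivAt_const s θ))
  have hsliceS : ∀ (θ : Fin ℓ → ℝ) (s : ℝ),
      HasDerivAt (fun s' => W θ s')
        (fderiv ℝ (fun p : (Fin ℓ → ℝ) × ℝ => W p.1 p.2) (θ, s) (0, 1)) s := by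
    intro θ s
    exact (hWd (θ, s)).hasFDerivAt.comp_hasDerivAt s
      ((hasDerivAt_const s θ).prodMk (hasDerivAt_id s))
  have hsliceC : ∀ (θ : Fin ℓ → ℝ) (s : ℝ) (i : Fin (2 * d)),
      HasFDerivAt (fun θ' => W θ' s i)
        ((ContinuousLinearMap.proj i : ((Fin (2 * d)) → ℝ) →L[ℝ] ℝ).comp
          ((fderiv ℝ (fun p : (Fin ℓ → ℝ) × ℝ => W p.1 p.2) (θ, s)).comp
            ((ContinuousLinearMap.id ℝ (Fin ℓ → ℝ)).prod 0))) θ := by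
    intro θ s i
    exact (ContinuousLinearMap.proj i : ((Fin (2 * d)) → ℝ) →L[ℝ] ℝ).hasFDerivAt.comp θ
      (hslice θ s)
  have hDθ : ∀ (θ : Fin ℓ → ℝ) (s : ℝ) (i : Fin (2 * d)) (j : Fin ℓ),
      DthetaW W θ s i j
        = fderiv ℝ (fun p : (Fin ℓ → ℝ) × ℝ => W p.1 p.2) (θ, s)
            ((Pi.single j 1 : Fin ℓ → ℝ), (0 : ℝ)) i := by
    intro θ s i j
    have h := (hsliceC θ s i).fderiv
    simp only [DthetaW]
    rw [h]
    simp
  have hDs : ∀ (θ : Fin ℓ → ℝ) (s : ℝ),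
      DsW W θ s
        = fun i => fderiv ℝ (fun p : (Fin ℓ → ℝ) × ℝ => W p.1 p.2) (θ, s) (0, 1) i := by
    intro θ s
    funext i
    have h1 : HasDerivAt (fun s' => W θ s' i)
        (fderiv ℝ (fun p : (Fin ℓ → ℝ) × ℝ => W p.1 p.2) (θ, s) (0, 1) i) s :=
      (ContinuousLinearMap.proj i : ((Fin (2 * d)) → ℝ) →L[ℝ] ℝ).hasFDerivAt.comp_hasDerivAt s
        (hsliceS θ s)
    simp only [DsW]
    exact h1.deriv
  -- continuity of the partial derivatives
  have hfcont : Continuous (fun p : (Fin ℓ → ℝ) × ℝ =>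
      fderiv ℝ (fun q : (Fin ℓ → ℝ) × ℝ => W q.1 q.2) p) := hW.continuous_fderiv one_ne_zero
  have hcθ : ∀ (a : Fin (2 * d)) (b : Fin ℓ),
      Continuous (fun p : (Fin ℓ → ℝ) × ℝ => DthetaW W p.1 p.2 a b) := by
    intro a b
    have h : (fun p : (Fin ℓ → ℝ) × ℝ => DthetaW W p.1 p.2 a b)
        = fun p => fderiv ℝ (fun q : (Fin ℓ → ℝ) × ℝ => W q.1 q.2) p
            ((Pi.single b 1 : Fin ℓ → ℝ), (0 : ℝ)) a := by
      funext p; exact hDθ p.1 p.2 a b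
    rw [h]
    exact (continuous_apply a).comp (hfcont.clm_apply continuous_const)
  have hcs : ∀ (a : Fin (2 * d)),
      Continuous (fun p : (Fin ℓ → ℝ) × ℝ => DsW W p.1 p.2 a) := by
    intro a
    have h : (fun p : (Fin ℓ → ℝ) × ℝ => DsW W p.1 p.2 a)
        = fun p => fderiv ℝ (fun q : (Fin ℓ → ℝ) × ℝ => W q.1 q.2) p
            ((0 : Fin ℓ → ℝ), (1 : ℝ)) a := by
      funext p; exact congrFun (hDs p.1 p.2) a
    rw [h]
    exact (continuous_apply a).comp (hfcont.clm_apply continuous_const)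
  have hOcont : ∀ (i j : Fin ℓ),
      Continuous (fun p : (Fin ℓ → ℝ) × ℝ =>
        ((DthetaW W p.1 p.2)ᵀ * J * DthetaW W p.1 p.2) i j) := by
    intro i j
    have h : (fun p : (Fin ℓ → ℝ) × ℝ => ((DthetaW W p.1 p.2)ᵀ * J * DthetaW W p.1 p.2) i j)
        = fun p => ∑ m, (∑ k', DthetaW W p.1 p.2 k' i * J k' m) * DthetaW W p.1 p.2 m j := by
      funext p
      simp [Matrix.mul_apply, Matrix.transpose_apply]
    rw [h]
    refine continuous_finset_sum _ fun m _ => Continuous.mul ?_ (hcθ m j)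
    exact continuous_finset_sum _ fun k' _ => (hcθ k' i).mul continuous_const
  have hvcont : ∀ (i : Fin ℓ),
      Continuous (fun p : (Fin ℓ → ℝ) × ℝ =>
        (((DthetaW W p.1 p.2)ᵀ).mulVec (J.mulVec (DsW W p.1 p.2))) i) := by
    intro i
    have h : (fun p : (Fin ℓ → ℝ) × ℝ =>
          (((DthetaW W p.1 p.2)ᵀ).mulVec (J.mulVec (DsW W p.1 p.2))) i)
        = fun p => ∑ k', DthetaW W p.1 p.2 k' i * ∑ m, J k' m * DsW W p.1 p.2 m := by
      funext p
      simp [Matrix.mulVec, dotProduct, Matrix.transpose_apply]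
    rw [h]
    refine continuous_finset_sum _ fun k' _ => (hcθ k' i).mul ?_
    exact continuous_finset_sum _ fun m _ => continuous_const.mul (hcs m)
  -- chain rule in θ : jacobian F * DθW(θ,s) = DθW(θ+ω, μ s)
  have hc1 : ∀ (θ : Fin ℓ → ℝ), ∀ s ∈ Set.Icc (-1 : ℝ) 1,
      jacobian F (W θ s) * DthetaW W θ s = DthetaW W (θ + ω) (μ * s) := by
    intro θ s hs
    have hcomp := (hFd (W θ s)).hasFDerivAt.comp θ (hslice θ s)
    simp only [Function.comp_def] at hcomp
    have heq : (fun θ' => F (W θ' s)) = fun θ' => W (θ' + ω) (μ * s) :=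
      funext fun θ' => hinv θ' s hs
    rw [heq] at hcomp
    have hcomp2 := (hslice (θ + ω) (μ * s)).comp θ ((hasFDerivAt_id θ).add_const ω)
    have huniq := hcomp.unique hcomp2
    ext i j
    rw [Matrix.mul_apply]
    rw [hDθ (θ + ω) (μ * s) i j]
    have h2 : fderiv ℝ (fun p : (Fin ℓ → ℝ) × ℝ => W p.1 p.2) (θ + ω, μ * s)
          ((Pi.single j 1 : Fin ℓ → ℝ), (0 : ℝ)) i
        = (((fderiv ℝ (fun p : (Fin ℓ → ℝ) × ℝ => W p.1 p.2) (θ + ω, μ * s)).comp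
            ((ContinuousLinearMap.id ℝ (Fin ℓ → ℝ)).prod 0)).comp
            (ContinuousLinearMap.id ℝ (Fin ℓ → ℝ))) (Pi.single j 1) i := by
      simp
    rw [h2, ← huniq]
    rw [ContinuousLinearMap.comp_apply]
    have hu : ((fderiv ℝ (fun p : (Fin ℓ → ℝ) × ℝ => W p.1 p.2) (θ, s)).comp
          ((ContinuousLinearMap.id ℝ (Fin ℓ → ℝ)).prod 0)) (Pi.single j 1)
        = fun k => DthetaW W θ s k j := by
      funext k
      rw [hDθ θ s k j]
      simp
    rw [hu, clm_fin_apply]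
    simp [jacobian, Finset.sum_apply, mul_comm]
  -- chain rule in s : jacobian F *ᵥ DsW(θ,s) = μ • DsW(θ+ω, μ s)
  have hc2 : ∀ (θ : Fin ℓ → ℝ), ∀ s ∈ Set.Ioo (-1 : ℝ) 1,
      (jacobian F (W θ s)).mulVec (DsW W θ s) = μ • DsW W (θ + ω) (μ * s) := by
    intro θ s hs
    have hd2 : HasDerivAt (fun s' => F (W θ s'))
        (fderiv ℝ F (W θ s)
          (fderiv ℝ (fun p : (Fin ℓ → ℝ) × ℝ => W p.1 p.2) (θ, s) (0, 1))) s :=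
      (hFd (W θ s)).hasFDerivAt.comp_hasDerivAt s (hsliceS θ s)
    have hmul : HasDerivAt (fun s' : ℝ => μ * s') μ s := by
      simpa using (hasDerivAt_id s).const_mul μ
    have hd3 : HasDerivAt (fun s' => W (θ + ω) (μ * s'))
        (μ • fderiv ℝ (fun p : (Fin ℓ → ℝ) × ℝ => W p.1 p.2) (θ + ω, μ * s) (0, 1)) s :=
      (hsliceS (θ + ω) (μ * s)).scomp s hmul
    have hev : (fun s' => W (θ + ω) (μ * s')) =ᶠ[nhds s] (fun s' => F (W θ s')) := by
      filter_upwards [Ioo_mem_nhds hs.1 hs.2] with t ht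
      exact (hinv θ t (Set.Ioo_subset_Icc_self ht)).symm
    have hd2' : HasDerivAt (fun s' => W (θ + ω) (μ * s'))
        (fderiv ℝ F (W θ s)
          (fderiv ℝ (fun p : (Fin ℓ → ℝ) × ℝ => W p.1 p.2) (θ, s) (0, 1))) s :=
      hd2.congr_of_eventuallyEq hev
    have huniq := hd2'.unique hd3
    funext i
    have hL : ((jacobian F (W θ s)).mulVec (DsW W θ s)) i
        = ∑ k, (fderiv ℝ (fun p : (Fin ℓ → ℝ) × ℝ => W p.1 p.2) (θ, s) (0, 1)) k
            * jacobian F (W θ s) i k := by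
      rw [hDs θ s]
      simp [Matrix.mulVec, dotProduct, mul_comm]
    have hR : fderiv ℝ F (W θ s)
          (fderiv ℝ (fun p : (Fin ℓ → ℝ) × ℝ => W p.1 p.2) (θ, s) (0, 1)) i
        = ∑ k, (fderiv ℝ (fun p : (Fin ℓ → ℝ) × ℝ => W p.1 p.2) (θ, s) (0, 1)) k
            * jacobian F (W θ s) i k := by
      rw [clm_fin_apply]
      simp [jacobian, Finset.sum_apply]
    rw [hL, ← hR, congrFun huniq i, hDs (θ + ω) (μ * s)]
  -- recurrences
  have hOrec : ∀ (θ : Fin ℓ → ℝ), ∀ s ∈ Set.Icc (-1 : ℝ) 1,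
      (DthetaW W θ s)ᵀ * J * DthetaW W θ s
        = (DthetaW W (θ + ω) (μ * s))ᵀ * J * DthetaW W (θ + ω) (μ * s) := by
    intro θ s hs
    rw [← hc1 θ s hs, Matrix.transpose_mul]
    have hm : (DthetaW W θ s)ᵀ * (jacobian F (W θ s))ᵀ * J
          * (jacobian F (W θ s) * DthetaW W θ s)
        = (DthetaW W θ s)ᵀ * J * DthetaW W θ s := by
      calc (DthetaW W θ s)ᵀ * (jacobian F (W θ s))ᵀ * J
            * (jacobian F (W θ s) * DthetaW W θ s)
          = (DthetaW W θ s)ᵀ * (((jacobian F (W θ s))ᵀ * J * jacobian F (W θ s))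
              * DthetaW W θ s) := by simp only [Matrix.mul_assoc]
        _ = (DthetaW W θ s)ᵀ * (J * DthetaW W θ s) := by rw [hFsymp (W θ s)]
        _ = (DthetaW W θ s)ᵀ * J * DthetaW W θ s := by rw [Matrix.mul_assoc]
    rw [hm]
  have hvrec : ∀ (θ : Fin ℓ → ℝ), ∀ s ∈ Set.Ioo (-1 : ℝ) 1,
      ((DthetaW W θ s)ᵀ).mulVec (J.mulVec (DsW W θ s))
        = μ • (((DthetaW W (θ + ω) (μ * s))ᵀ).mulVec
            (J.mulVec (DsW W (θ + ω) (μ * s)))) := by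
    intro θ s hs
    rw [← hc1 θ s (Set.Ioo_subset_Icc_self hs), ← Matrix.mulVec_smul, ← Matrix.mulVec_smul,
      ← hc2 θ s hs, Matrix.transpose_mul]
    simp only [Matrix.mulVec_mulVec]
    have hm : (DthetaW W θ s)ᵀ * (jacobian F (W θ s))ᵀ * (J * jacobian F (W θ s))
        = (DthetaW W θ s)ᵀ * J := by
      calc (DthetaW W θ s)ᵀ * (jacobian F (W θ s))ᵀ * (J * jacobian F (W θ s))
          = (DthetaW W θ s)ᵀ * ((jacobian F (W θ s))ᵀ * J * jacobian F (W θ s)) := by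
            simp only [Matrix.mul_assoc]
        _ = (DthetaW W θ s)ᵀ * J := by rw [hFsymp (W θ s)]
    rw [hm]
  -- membership lemmas
  have hmemIcc : ∀ (n : ℕ) {s : ℝ}, s ∈ Set.Icc (-1 : ℝ) 1 → μ ^ n * s ∈ Set.Icc (-1 : ℝ) 1 := by
    intro n s hs
    have h3 : |s| ≤ 1 := abs_le.mpr ⟨hs.1, hs.2⟩
    have h1 : |μ ^ n * s| ≤ 1 := by
      rw [abs_mul, abs_pow]
      calc |μ| ^ n * |s| ≤ 1 * 1 := by
            refine mul_le_mul ?_ h3 (abs_nonneg s) zero_le_one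
            exact pow_le_one₀ (abs_nonneg μ) hμ1.le
        _ = 1 := one_mul 1
    exact Set.mem_Icc.mpr (abs_le.mp h1)
  have hmemIoo : ∀ (n : ℕ) {s : ℝ}, s ∈ Set.Ioo (-1 : ℝ) 1 → μ ^ n * s ∈ Set.Ioo (-1 : ℝ) 1 := by
    intro n s hs
    have h3 : |s| < 1 := abs_lt.mpr ⟨hs.1, hs.2⟩
    have h1 : |μ ^ n * s| < 1 := by
      rw [abs_mul, abs_pow]
      calc |μ| ^ n * |s| ≤ 1 * |s| :=
            mul_le_mul_of_nonneg_right (pow_le_one₀ (abs_nonneg μ) hμ1.le) (abs_nonneg s)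
        _ = |s| := one_mul _
        _ < 1 := h3
    exact Set.mem_Ioo.mpr (abs_lt.mp h1)
  -- iterated recurrences
  have hOiter : ∀ (n : ℕ) (θ : Fin ℓ → ℝ), ∀ s ∈ Set.Icc (-1 : ℝ) 1,
      (DthetaW W θ s)ᵀ * J * DthetaW W θ s
        = (DthetaW W (θ + n • ω) (μ ^ n * s))ᵀ * J * DthetaW W (θ + n • ω) (μ ^ n * s) := by
    intro n
    induction n with
    | zero => intro θ s hs; simp
    | succ n ih =>
      intro θ s hs
      rw [ih θ s hs, hOrec (θ + n • ω) (μ ^ n * s) (hmemIcc n hs)]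
      have e1 : θ + n • ω + ω = θ + (n + 1) • ω := by
        rw [succ_nsmul, ← add_assoc]
      have e2 : μ * (μ ^ n * s) = μ ^ (n + 1) * s := by ring
      rw [e1, e2]
  have hviter : ∀ (n : ℕ) (θ : Fin ℓ → ℝ), ∀ s ∈ Set.Ioo (-1 : ℝ) 1,
      ((DthetaW W θ s)ᵀ).mulVec (J.mulVec (DsW W θ s))
        = μ ^ n • (((DthetaW W (θ + n • ω) (μ ^ n * s))ᵀ).mulVec
            (J.mulVec (DsW W (θ + n • ω) (μ ^ n * s)))) := by
    intro n
    induction n with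
    | zero => intro θ s hs; simp
    | succ n ih =>
      intro θ s hs
      rw [ih θ s hs, hvrec (θ + n • ω) (μ ^ n * s) (hmemIoo n hs), smul_smul, ← pow_succ]
      have e1 : θ + n • ω + ω = θ + (n + 1) • ω := by
        rw [succ_nsmul, ← add_assoc]
      have e2 : μ * (μ ^ n * s) = μ ^ (n + 1) * s := by ring
      rw [e1, e2]
  -- main argument
  intro θ s hs
  set τ : ℕ → Fin ℓ → ℝ := fun n i => Int.fract ((θ + n • ω) i) with hτdef
  have hτrel : ∀ n : ℕ, θ + n • ω = τ n + fun i => ((⌊(θ + n • ω) i⌋ : ℤ) : ℝ) := by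
    intro n
    funext i
    show (θ + n • ω) i = Int.fract ((θ + n • ω) i) + ((⌊(θ + n • ω) i⌋ : ℤ) : ℝ)
    exact (Int.fract_add_floor _).symm
  have hτmem : ∀ n, τ n ∈ Set.Icc (0 : Fin ℓ → ℝ) 1 :=
    fun n => Set.mem_Icc.mpr ⟨fun i => Int.fract_nonneg _, fun i => (Int.fract_lt_one _).le⟩
  obtain ⟨τs, hτs, φ, hφ, hτlim⟩ :=
    (isCompact_Icc : IsCompact (Set.Icc (0 : Fin ℓ → ℝ) 1)).tendsto_subseq hτmem
  have hμlim : Filter.Tendsto (fun k => μ ^ φ k) Filter.atTop (nhds 0) :=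
    (tendsto_pow_atTop_nhds_zero_of_abs_lt_one hμ1).comp hφ.tendsto_atTop
  -- periodicity of the derivatives
  have hperθ : ∀ (τ' : Fin ℓ → ℝ) (e : Fin ℓ → ℤ) (σ : ℝ),
      DthetaW W (τ' + fun i => (e i : ℝ)) σ = DthetaW W τ' σ := by
    intro τ' e σ
    funext i j
    have hfun : (fun θ' => W (θ' + fun i => (e i : ℝ)) σ i) = (fun θ' => W θ' σ i) := by
      funext θ'
      exact congrFun (hWper θ' e σ) i
    have hdiff : ∀ x, DifferentiableAt ℝ (fun θ' => W θ' σ i) x :=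
      fun x => (hsliceC x σ i).differentiableAt
    have key : fderiv ℝ (fun θ' => W θ' σ i) τ'
        = fderiv ℝ (fun θ' => W (θ' + fun i => (e i : ℝ)) σ i) τ' := by rw [hfun]
    have hh : HasFDerivAt (fun θ' => W (θ' + fun i => (e i : ℝ)) σ i)
        ((fderiv ℝ (fun θ' => W θ' σ i) (τ' + fun i => (e i : ℝ))).comp
          (ContinuousLinearMap.id ℝ (Fin ℓ → ℝ))) τ' :=
      (hdiff (τ' + fun i => (e i : ℝ))).hasFDerivAt.comp (f := fun x => id x + fun i => (e i : ℝ)) τ'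
        ((hasFDerivAt_id τ').add_const _)
    have key2 : fderiv ℝ (fun θ' => W (θ' + fun i => (e i : ℝ)) σ i) τ' (Pi.single j 1)
        = fderiv ℝ (fun θ' => W θ' σ i) (τ' + fun i => (e i : ℝ)) (Pi.single j 1) := by
      rw [hh.fderiv]
      simp
    show fderiv ℝ (fun θ' => W θ' σ i) (τ' + fun i => (e i : ℝ)) (Pi.single j 1)
        = fderiv ℝ (fun θ' => W θ' σ i) τ' (Pi.single j 1)
    rw [key]
    exact key2.symm
  have hpers : ∀ (τ' : Fin ℓ → ℝ) (e : Fin ℓ → ℤ) (σ : ℝ),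
      DsW W (τ' + fun i => (e i : ℝ)) σ = DsW W τ' σ := by
    intro τ' e σ
    funext i
    simp only [DsW]
    congr 1
    funext s'
    exact congrFun (hWper τ' e s') i
  constructor
  · -- part (i)
    ext i j
    have hconst : ∀ k : ℕ, ((DthetaW W θ s)ᵀ * J * DthetaW W θ s) i j
        = ((DthetaW W (τ (φ k)) (μ ^ φ k * s))ᵀ * J * DthetaW W (τ (φ k)) (μ ^ φ k * s)) i j := by
      intro k
      rw [hOiter (φ k) θ s hs]
      have hD : DthetaW W (θ + φ k • ω) (μ ^ φ k * s)
          = DthetaW W (τ (φ k)) (μ ^ φ k * s) := by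
        rw [hτrel (φ k)]
        exact hperθ (τ (φ k)) (fun i => ⌊(θ + φ k • ω) i⌋) (μ ^ φ k * s)
      rw [hD]
    have hslim : Filter.Tendsto (fun k => μ ^ φ k * s) Filter.atTop (nhds 0) := by
      simpa using hμlim.mul_const s
    have hpairlim : Filter.Tendsto (fun k => (τ (φ k), μ ^ φ k * s)) Filter.atTop
        (nhds (τs, 0)) := hτlim.prodMk_nhds hslim
    have hlim0 : Filter.Tendsto (fun k => ((DthetaW W (τ (φ k)) (μ ^ φ k * s))ᵀ * J
        * DthetaW W (τ (φ k)) (μ ^ φ k * s)) i j) Filter.atTop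
        (nhds (((DthetaW W τs 0)ᵀ * J * DthetaW W τs 0) i j)) := by
      have h := ((hOcont i j).tendsto (τs, 0)).comp hpairlim
      simpa [Function.comp_def] using h
    have hfin : ((DthetaW W θ s)ᵀ * J * DthetaW W θ s) i j
        = ((DthetaW W τs 0)ᵀ * J * DthetaW W τs 0) i j :=
      (tendsto_nhds_unique (hlim0.congr fun k => (hconst k).symm) tendsto_const_nhds).symm
    rw [hfin, hiso0 τs]
  · -- part (ii)
    have hIoo : ∀ s' ∈ Set.Ioo (-1 : ℝ) 1,
        ((DthetaW W θ s')ᵀ).mulVec (J.mulVec (DsW W θ s')) = 0 := by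
      intro s' hs'
      funext i
      have hDD : ∀ k : ℕ, (((DthetaW W (θ + φ k • ω) (μ ^ φ k * s'))ᵀ).mulVec
            (J.mulVec (DsW W (θ + φ k • ω) (μ ^ φ k * s'))))
          = (((DthetaW W (τ (φ k)) (μ ^ φ k * s'))ᵀ).mulVec
            (J.mulVec (DsW W (τ (φ k)) (μ ^ φ k * s')))) := by
        intro k
        rw [hτrel (φ k), hperθ, hpers]
      have hconst : ∀ k : ℕ, (((DthetaW W θ s')ᵀ).mulVec (J.mulVec (DsW W θ s'))) i
          = μ ^ φ k * ((((DthetaW W (τ (φ k)) (μ ^ φ k * s'))ᵀ).mulVec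
              (J.mulVec (DsW W (τ (φ k)) (μ ^ φ k * s')))) i) := by
        intro k
        rw [hviter (φ k) θ s' hs', hDD k]
        rfl
      have hslim' : Filter.Tendsto (fun k => μ ^ φ k * s') Filter.atTop (nhds 0) := by
        simpa using hμlim.mul_const s'
      have hpair' : Filter.Tendsto (fun k => (τ (φ k), μ ^ φ k * s')) Filter.atTop
          (nhds (τs, 0)) := hτlim.prodMk_nhds hslim'
      have h2 : Filter.Tendsto (fun k => ((((DthetaW W (τ (φ k)) (μ ^ φ k * s'))ᵀ).mulVec
            (J.mulVec (DsW W (τ (φ k)) (μ ^ φ k * s')))) i)) Filter.atTop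
          (nhds ((((DthetaW W τs 0)ᵀ).mulVec (J.mulVec (DsW W τs 0))) i)) := by
        have h := ((hvcont i).tendsto (τs, 0)).comp hpair'
        simpa [Function.comp_def] using h
      have hlim : Filter.Tendsto (fun k => μ ^ φ k
          * ((((DthetaW W (τ (φ k)) (μ ^ φ k * s'))ᵀ).mulVec
              (J.mulVec (DsW W (τ (φ k)) (μ ^ φ k * s')))) i)) Filter.atTop (nhds 0) := by
        simpa using hμlim.mul h2
      have hz : (((DthetaW W θ s')ᵀ).mulVec (J.mulVec (DsW W θ s'))) i = 0 :=
        tendsto_nhds_unique (tendsto_const_nhds.congr hconst) hlim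
      rw [hz]
      simp
    have hcl : Continuous (fun s' : ℝ =>
        ((DthetaW W θ s')ᵀ).mulVec (J.mulVec (DsW W θ s'))) := by
      apply continuous_pi
      intro i
      exact (hvcont i).comp (Continuous.prodMk_right θ)
    have hclosed : IsClosed {s' : ℝ |
        ((DthetaW W θ s')ᵀ).mulVec (J.mulVec (DsW W θ s')) = 0} :=
      isClosed_eq hcl continuous_const
    have hsub : Set.Icc (-1 : ℝ) 1 ⊆ {s' : ℝ |
        ((DthetaW W θ s')ᵀ).mulVec (J.mulVec (DsW W θ s')) = 0} := by
      rw [← closure_Ioo (by norm_num : (-1 : ℝ) ≠ 1)]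
      exact closure_minimal (fun s' hs' => hIoo s' hs') hclosed
    exact hsub hs
end

section
/- (Quadratic error of the Newton step.) Let F: ℝ^m → ℝ^m be C² with sup_x ‖D²F(x)‖ ≤ C₂ < ∞, let ω ∈ ℝ^ℓ, and let K, Δ: ℝ^ℓ → ℝ^m be continuous, bounded, ℤ^ℓ-periodic functions. Define the error E(θ) = F(K(θ)) − K(θ+ω), and suppose Δ solves the linearized equation DF(K(θ)) Δ(θ) − Δ(θ+ω) = −E(θ) for all θ. Then the error of the corrected embedding, Ẽ(θ) = F(K(θ)+Δ(θ)) − (K(θ+ω)+Δ(θ+ω)), satisfies sup_θ ‖Ẽ(θ)‖ ≤ (C₂/2) (sup_θ ‖Δ(θ)‖)². -/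
open Set

/-- If the second derivative of `F` is bounded by `C₂` everywhere, then `fderiv ℝ F`
is `C₂`-Lipschitz (stated as a norm inequality). -/
lemma fderiv_lip_of_iteratedFDeriv_two_le {E G : Type*} [NormedAddCommGroup E]
    [NormedSpace ℝ E] [NormedAddCommGroup G] [NormedSpace ℝ G]
    {F : E → G} {C₂ : ℝ} (hF : ContDiff ℝ 2 F)
    (hC₂ : ∀ x, ‖iteratedFDeriv ℝ 2 F x‖ ≤ C₂) (x y : E) :
    ‖fderiv ℝ F x - fderiv ℝ F y‖ ≤ C₂ * ‖x - y‖ := by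
  have hC₂0 : 0 ≤ C₂ := (norm_nonneg _).trans (hC₂ 0)
  have hdiff : Differentiable ℝ (fun z => fderiv ℝ F z) :=
    (hF.fderiv_right (m := 1) (by norm_num)).differentiable (by norm_num)
  have key : ∀ z, ‖fderiv ℝ (fun w => fderiv ℝ F w) z‖ ≤ C₂ := by
    intro z
    apply ContinuousLinearMap.opNorm_le_bound _ hC₂0
    intro u
    rw [mul_comm C₂ ‖u‖]
    apply ContinuousLinearMap.opNorm_le_bound _ (by positivity)
    intro v
    have h2 : fderiv ℝ (fun w => fderiv ℝ F w) z u v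
        = iteratedFDeriv ℝ 2 F z ![u, v] := by
      rw [iteratedFDeriv_succ_apply_right]
      have hinit : Fin.init ![u, v] = ![u] := by
        funext i
        fin_cases i
        rfl
      rw [hinit]
      rw [iteratedFDeriv_one_apply]
      rfl
    rw [h2]
    calc ‖iteratedFDeriv ℝ 2 F z ![u, v]‖
        ≤ ‖iteratedFDeriv ℝ 2 F z‖ * ∏ i, ‖(![u, v]) i‖ :=
          (iteratedFDeriv ℝ 2 F z).le_opNorm _
      _ ≤ C₂ * (‖u‖ * ‖v‖) := by
          rw [Fin.prod_univ_two]
          exact mul_le_mul_of_nonneg_right (hC₂ z) (by positivity)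
      _ = ‖u‖ * C₂ * ‖v‖ := by ring
  have hlip : LipschitzWith (NNReal.mk C₂ hC₂0) (fun z => fderiv ℝ F z) :=
    lipschitzWith_of_nnnorm_fderiv_le hdiff (fun z => by
      rw [← NNReal.coe_le_coe]
      exact key z)
  simpa [dist_eq_norm] using hlip.dist_le_mul x y

/-- Quadratic Taylor estimate. -/
lemma taylor_quadratic {E G : Type*} [NormedAddCommGroup E]
    [NormedSpace ℝ E] [NormedAddCommGroup G] [NormedSpace ℝ G]
    {F : E → G} {C₂ : ℝ} (hF : ContDiff ℝ 2 F)
    (hC₂ : ∀ x, ‖iteratedFDeriv ℝ 2 F x‖ ≤ C₂) (x h : E) :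
    ‖F (x + h) - F x - fderiv ℝ F x h‖ ≤ C₂ / 2 * ‖h‖ ^ 2 := by
  have hC₂0 : 0 ≤ C₂ := (norm_nonneg _).trans (hC₂ 0)
  have hFd : Differentiable ℝ F := hF.differentiable (by norm_num)
  set g : ℝ → G := fun t => F (x + t • h) - F x - t • (fderiv ℝ F x h) with hg
  set g' : ℝ → G := fun t => fderiv ℝ F (x + t • h) h - fderiv ℝ F x h with hg'
  have hder : ∀ t : ℝ, HasDerivAt g (g' t) t := by
    intro t
    have h1 : HasDerivAt (fun s : ℝ => x + s • h) h t := by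
      simpa using ((hasDerivAt_id t).smul_const h).const_add x
    have h2 : HasDerivAt (fun s : ℝ => F (x + s • h)) (fderiv ℝ F (x + t • h) h) t :=
      (hFd (x + t • h)).hasFDerivAt.comp_hasDerivAt t h1
    have h3 : HasDerivAt (fun s : ℝ => s • (fderiv ℝ F x h)) (fderiv ℝ F x h) t := by
      simpa using (hasDerivAt_id t).smul_const (fderiv ℝ F x h)
    have := (h2.sub_const (F x)).sub h3; exact this
  have hbound : ∀ t ∈ Ico (0 : ℝ) 1, ‖g' t‖ ≤ C₂ * ‖h‖ ^ 2 * t := by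
    intro t ht
    have : ‖g' t‖ ≤ ‖fderiv ℝ F (x + t • h) - fderiv ℝ F x‖ * ‖h‖ := by
      have := ContinuousLinearMap.le_opNorm (fderiv ℝ F (x + t • h) - fderiv ℝ F x) h
      simpa [hg'] using this
    refine this.trans ?_
    have hl : ‖fderiv ℝ F (x + t • h) - fderiv ℝ F x‖ ≤ C₂ * (t * ‖h‖) := by
      have := fderiv_lip_of_iteratedFDeriv_two_le hF hC₂ (x + t • h) x
      simpa [norm_smul, abs_of_nonneg ht.1] using this
    calc ‖fderiv ℝ F (x + t • h) - fderiv ℝ F x‖ * ‖h‖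
        ≤ (C₂ * (t * ‖h‖)) * ‖h‖ := mul_le_mul_of_nonneg_right hl (norm_nonneg _)
      _ = C₂ * ‖h‖ ^ 2 * t := by ring
  have hB : ∀ t : ℝ, HasDerivAt (fun s => C₂ * ‖h‖ ^ 2 * s ^ 2 / 2) (C₂ * ‖h‖ ^ 2 * t) t := by
    intro t
    have := ((hasDerivAt_pow 2 t).const_mul (C₂ * ‖h‖ ^ 2)).div_const 2
    simpa using this.congr_deriv (by ring)
  have hmain := image_norm_le_of_norm_deriv_right_le_deriv_boundary
    (f := g) (f' := g') (a := 0) (b := 1)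
    (fun t _ => (hder t).continuousAt.continuousWithinAt)
    (fun t _ => (hder t).hasDerivWithinAt)
    (B := fun s => C₂ * ‖h‖ ^ 2 * s ^ 2 / 2) (B' := fun s => C₂ * ‖h‖ ^ 2 * s)
    (by simp [hg]) hB hbound
  have h1 := hmain (x := 1) (by norm_num)
  have he : C₂ * ‖h‖ ^ 2 * (1:ℝ) ^ 2 / 2 = C₂ / 2 * ‖h‖ ^ 2 := by ring
  rw [← he]
  simpa [hg] using h1

/-- **Quadratic error of the Newton step.**
Let `F : ℝ^m → ℝ^m` be `C²` with `‖D²F‖ ≤ C₂` everywhere, and let `K`, `Δ` be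
continuous, bounded, `ℤ^ℓ`-periodic maps `ℝ^ℓ → ℝ^m`.  If `Δ` solves the linearized
invariance equation `DF(K(θ)) Δ(θ) − Δ(θ+ω) = −E(θ)` with
`E(θ) = F(K(θ)) − K(θ+ω)`, then the corrected error
`Ẽ(θ) = F(K(θ)+Δ(θ)) − (K(θ+ω)+Δ(θ+ω))` satisfies
`‖Ẽ(θ)‖ ≤ (C₂/2) (sup_θ' ‖Δ(θ')‖)²` for every `θ`. -/
theorem stmt19 (ℓ m : ℕ) (F : (Fin m → ℝ) → Fin m → ℝ) (C₂ : ℝ)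
    (hF : ContDiff ℝ 2 F) (hC₂ : ∀ x, ‖iteratedFDeriv ℝ 2 F x‖ ≤ C₂)
    (ω : Fin ℓ → ℝ) (K Δ : (Fin ℓ → ℝ) → Fin m → ℝ)
    (hKc : Continuous K) (hΔc : Continuous Δ)
    (hKb : ∃ c : ℝ, ∀ θ, ‖K θ‖ ≤ c) (hΔb : ∃ c : ℝ, ∀ θ, ‖Δ θ‖ ≤ c)
    (hKper : ∀ (θ : Fin ℓ → ℝ) (e : Fin ℓ → ℤ), K (θ + fun i => (e i : ℝ)) = K θ)
    (hΔper : ∀ (θ : Fin ℓ → ℝ) (e : Fin ℓ → ℤ), Δ (θ + fun i => (e i : ℝ)) = Δ θ)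
    (hNewton : ∀ θ, fderiv ℝ F (K θ) (Δ θ) - Δ (θ + ω) = -(F (K θ) - K (θ + ω))) :
    ∀ θ, ‖F (K θ + Δ θ) - (K (θ + ω) + Δ (θ + ω))‖ ≤
      C₂ / 2 * (⨆ θ' : Fin ℓ → ℝ, ‖Δ θ'‖) ^ 2 := by
  intro θ
  have hC₂0 : 0 ≤ C₂ := (norm_nonneg _).trans (hC₂ 0)
  obtain ⟨c, hc⟩ := hΔb
  have hbdd : BddAbove (range fun θ' : Fin ℓ → ℝ => ‖Δ θ'‖) :=
    ⟨c, by rintro _ ⟨θ', rfl⟩; exact hc θ'⟩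
  have hsup : ‖Δ θ‖ ≤ ⨆ θ' : Fin ℓ → ℝ, ‖Δ θ'‖ := le_ciSup hbdd θ
  have hsup0 : 0 ≤ ⨆ θ' : Fin ℓ → ℝ, ‖Δ θ'‖ := (norm_nonneg _).trans hsup
  have heq : F (K θ + Δ θ) - (K (θ + ω) + Δ (θ + ω))
      = F (K θ + Δ θ) - F (K θ) - fderiv ℝ F (K θ) (Δ θ) := by
    have := hNewton θ
    have hΔω : Δ (θ + ω) = fderiv ℝ F (K θ) (Δ θ) + (F (K θ) - K (θ + ω)) := by
      have := congrArg (fun z => z + Δ (θ + ω) + (F (K θ) - K (θ + ω))) this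
      simpa using by linear_combination (norm := abel) -this
    rw [hΔω]; abel
  rw [heq]
  calc ‖F (K θ + Δ θ) - F (K θ) - fderiv ℝ F (K θ) (Δ θ)‖
      ≤ C₂ / 2 * ‖Δ θ‖ ^ 2 := taylor_quadratic hF hC₂ (K θ) (Δ θ)
    _ ≤ C₂ / 2 * (⨆ θ' : Fin ℓ → ℝ, ‖Δ θ'‖) ^ 2 := by
        apply mul_le_mul_of_nonneg_left _ (by positivity)
        exact pow_le_pow_left₀ (norm_nonneg _) hsup 2
end
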